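/- arXiv:2602.12551 — 7 statements merged into one kernel-verified Lean document; each statement's English description precedes it below -/
import Mathlib

section
/- Let T be a finite tournament with n vertices. If n ≥ 10, then there exists a regular tournamenton W such that t(T, W) > 2^(-(n choose 2)). -/
open MeasureTheory

noncomputable section

/-- The unit interval as a subset of `ℝ`. -/
def I01 : Set ℝ := Set.Icc 0 1

/-- A tournamenton: a measurable `W : [0,1]² → [0,1]` with `W x y + W y x = 1`. -/
def IsTournamenton (W : ℝ → ℝ → ℝ) : Prop :=
  Measurable (Function.uncurry W) ∧
  ∀ x ∈ I01, ∀ y ∈ I01, 0 ≤ W x y ∧ W x y ≤ 1 ∧ W x y + W y x = 1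

/-- A tournamenton is regular if almost every vertex has out-degree `1/2`. -/
def IsRegularT (W : ℝ → ℝ → ℝ) : Prop :=
  ∀ᵐ x : ℝ, x ∈ I01 → (∫ y in I01, W x y) = 1 / 2

/-- `W` equals `1/2` almost everywhere on `[0,1]²`. -/
def ConstHalf (W : ℝ → ℝ → ℝ) : Prop :=
  ∀ᵐ p : ℝ × ℝ, p ∈ I01 ×ˢ I01 → W p.1 p.2 = 1 / 2

open scoped Classical in
/-- Homomorphism density of the digraph with vertex set `V` and edge relation `E`
in the tournamenton `W`. -/
def homDensity {V : Type} [Fintype V] (E : V → V → Prop) (W : ℝ → ℝ → ℝ) : ℝ :=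
  ∫ x in Set.univ.pi (fun _ : V => I01),
    ∏ p ∈ Finset.univ.filter (fun p : V × V => E p.1 p.2), W (x p.1) (x p.2)

/-- `E` is the edge relation of a tournament. -/
def IsTournament {V : Type} (E : V → V → Prop) : Prop :=
  (∀ v, ¬ E v v) ∧ ∀ u v : V, u ≠ v → (E u v ↔ ¬ E v u)

/-- the edge relation is transitive (for a tournament: a strict linear order). -/
def IsTransitive {V : Type} (E : V → V → Prop) : Prop :=
  ∀ u v w : V, E u v → E v w → E u w

/-- Vertex set of the blow-up `C[a,b,c]` of the cyclic triangle. -/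
abbrev CV (a b c : ℕ) := Fin a ⊕ Fin b ⊕ Fin c

/-- Which of the three parts a vertex belongs to. -/
def cpart {a b c : ℕ} : CV a b c → Fin 3
  | .inl _ => 0
  | .inr (.inl _) => 1
  | .inr (.inr _) => 2

/-- Index of a vertex inside its part. -/
def cidx {a b c : ℕ} : CV a b c → ℕ
  | .inl i => i
  | .inr (.inl i) => i
  | .inr (.inr i) => i

/-- Edges of `C[a,b,c]`: all edges from part 0 to part 1, part 1 to part 2 and
part 2 to part 0; no edges inside parts. -/
def CEdge (a b c : ℕ) (u v : CV a b c) : Prop := cpart v = cpart u + 1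

/-- Edges of the tournament `T[a,b,c]`: `C[a,b,c]` plus a transitive tournament on
each of the three parts. -/
def TEdge (a b c : ℕ) (u v : CV a b c) : Prop :=
  cpart v = cpart u + 1 ∨ (cpart u = cpart v ∧ cidx u < cidx v)

/-- Edges of `B[c]`: the digraph `C[1,1,c]` minus the edge between the two singleton
parts (a source, `c` middle vertices, a sink). -/
def BEdge (c : ℕ) (u v : CV 1 1 c) : Prop :=
  cpart v = cpart u + 1 ∧ cpart u ≠ 0

/-- `E` is isomorphic to the tournament `T[a,b,c]`. -/
def IsoToT {V : Type} (E : V → V → Prop) (a b c : ℕ) : Prop :=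
  ∃ e : V ≃ CV a b c, ∀ u v : V, E u v ↔ TEdge a b c (e u) (e v)

/-- The tournament `E` contains a subtournament isomorphic to `E'`. -/
def ContainsSub {V V' : Type} (E : V → V → Prop) (E' : V' → V' → Prop) : Prop :=
  ∃ f : V' → V, Function.Injective f ∧ ∀ u v : V', E' u v ↔ E (f u) (f v)

/-- The tournament `W₄`: a source dominating a cyclic triangle. -/
def W4Edge (u v : Fin 4) : Prop :=
  (u = 0 ∧ v ≠ 0) ∨ (u = 1 ∧ v = 2) ∨ (u = 2 ∧ v = 3) ∨ (u = 3 ∧ v = 1)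

/-- The tournament `L₄`: a sink dominated by a cyclic triangle. -/
def L4Edge (u v : Fin 4) : Prop :=
  (v = 0 ∧ u ≠ 0) ∨ (u = 1 ∧ v = 2) ∨ (u = 2 ∧ v = 3) ∨ (u = 3 ∧ v = 1)

/-- The 5-vertex carousel tournament `C₅`. -/
def C5Edge (u v : ZMod 5) : Prop := v - u = 1 ∨ v - u = 2

namespace S9
open Set

def bIdx (N : ℕ) (x : ℝ) : ℕ := min (⌊x * N⌋).toNat (N - 1)

lemma measurable_bIdx (N : ℕ) : Measurable (bIdx N) := by
  have h1 : Measurable fun x : ℝ => ⌊x * (N : ℝ)⌋ :=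
    Int.measurable_floor.comp (measurable_id.mul_const _)
  exact (measurable_of_countable (fun z : ℤ => min z.toNat (N - 1))).comp h1

lemma bIdx_lt {N : ℕ} (hN : 0 < N) (x : ℝ) : bIdx N x < N :=
  lt_of_le_of_lt (min_le_right _ _) (Nat.sub_lt hN one_pos)

lemma bIdx_eq {N k : ℕ} (hk : k < N) {x : ℝ}
    (hx : x ∈ Ico ((k : ℝ) / N) (((k : ℝ) + 1) / N)) : bIdx N x = k := by
  have hN : (0 : ℝ) < N := by
    have : 0 < N := Nat.pos_of_ne_zero (by omega)
    exact_mod_cast this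
  obtain ⟨h1, h2⟩ := hx
  have hf : ⌊x * N⌋ = (k : ℤ) := by
    rw [Int.floor_eq_iff]
    constructor
    · push_cast
      calc (k : ℝ) = (k : ℝ) / N * N := by field_simp
      _ ≤ x * N := by gcongr
    · push_cast
      calc x * N < ((k : ℝ) + 1) / N * N := by gcongr
      _ = (k : ℝ) + 1 := by field_simp
  unfold bIdx
  rw [hf]
  simp
  omega

lemma Ico01_eq_biUnion {N : ℕ} (hN : 0 < N) :
    Ico (0 : ℝ) 1 = ⋃ k ∈ Finset.range N, Ico ((k : ℝ) / N) (((k : ℝ) + 1) / N) := by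
  have hN' : (0 : ℝ) < N := by exact_mod_cast hN
  ext x
  simp only [Set.mem_iUnion, Finset.mem_range, mem_Ico]
  constructor
  · rintro ⟨h0, h1⟩
    have h0' : (0:ℤ) ≤ ⌊x * N⌋ := Int.floor_nonneg.2 (by positivity)
    have hcast : ((⌊x * N⌋.toNat : ℕ) : ℝ) = ((⌊x * N⌋ : ℤ) : ℝ) := by
      exact_mod_cast congrArg (fun z : ℤ => (z : ℝ)) (Int.toNat_of_nonneg h0')
    refine ⟨(⌊x * N⌋).toNat, ?_, ?_, ?_⟩
    · have hlt : ⌊x * N⌋ < N := Int.floor_lt.2 (by push_cast; nlinarith)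
      omega
    · have h : (⌊x * N⌋ : ℝ) ≤ x * N := Int.floor_le _
      rw [div_le_iff₀ hN', hcast]
      linarith
    · have h : x * N < ⌊x * N⌋ + 1 := Int.lt_floor_add_one _
      rw [lt_div_iff₀ hN', hcast]
      linarith
  · rintro ⟨k, hk, h1, h2⟩
    constructor
    · exact le_trans (by positivity) h1
    · have hkN : (k : ℝ) + 1 ≤ N := by exact_mod_cast Nat.succ_le_of_lt hk
      calc x < ((k:ℝ) + 1) / N := h2
        _ ≤ (N : ℝ) / N := by gcongr
        _ = 1 := by field_simp

lemma integral_step {N : ℕ} (hN : 0 < N) (f : ℕ → ℝ) :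
    ∫ y in Icc (0:ℝ) 1, f (bIdx N y) = (∑ k ∈ Finset.range N, f k) / N := by
  have hN' : (0 : ℝ) < N := by exact_mod_cast hN
  have hdisj : (↑(Finset.range N) : Set ℕ).Pairwise
      (Function.onFun Disjoint fun k : ℕ => Ico ((k : ℝ) / N) (((k : ℝ) + 1) / N)) := by
    intro k _ l _ hkl
    simp only [Function.onFun]
    rw [Set.Ico_disjoint_Ico]
    rcases hkl.lt_or_gt with h | h
    · have : (k : ℝ) + 1 ≤ l := by exact_mod_cast h
      refine le_trans (min_le_left _ _) (le_trans ?_ (le_max_right _ _))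
      gcongr
    · have : (l : ℝ) + 1 ≤ k := by exact_mod_cast h
      refine le_trans (min_le_right _ _) (le_trans ?_ (le_max_left _ _))
      gcongr
  have hconst : ∀ k ∈ Finset.range N,
      EqOn (fun y : ℝ => f (bIdx N y)) (fun _ => f k)
        (Ico ((k : ℝ) / N) (((k : ℝ) + 1) / N)) := by
    intro k hk y hy
    simp only
    rw [bIdx_eq (Finset.mem_range.1 hk) hy]
  have hint : ∀ k ∈ Finset.range N,
      IntegrableOn (fun y : ℝ => f (bIdx N y))
        (Ico ((k : ℝ) / N) (((k : ℝ) + 1) / N)) volume := by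
    intro k hk
    exact (integrableOn_const measure_Ico_lt_top.ne).congr_fun
      (fun y hy => ((hconst k hk) hy).symm) measurableSet_Ico
  rw [integral_Icc_eq_integral_Ico, Ico01_eq_biUnion hN,
    integral_biUnion_finset _ (fun k _ => measurableSet_Ico) hdisj hint]
  have : ∀ k ∈ Finset.range N,
      ∫ y in Ico ((k : ℝ) / N) (((k : ℝ) + 1) / N), f (bIdx N y) = f k / N := by
    intro k hk
    rw [setIntegral_congr_fun measurableSet_Ico (hconst k hk), setIntegral_const,
      measureReal_def, Real.volume_Ico]
    have h1 : ((k : ℝ) + 1) / N - (k : ℝ) / N = 1 / N := by field_simp; ring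
    rw [h1, ENNReal.toReal_ofReal (by positivity)]
    simp [smul_eq_mul]
    ring
  rw [Finset.sum_congr rfl this, Finset.sum_div]

lemma key_num (m : ℕ) : (2*m + 19)^2 < 2^(m + 9) := by
  induction m with
  | zero => norm_num
  | succ k ih =>
    have h1 : (2*(k+1) + 19)^2 ≤ 2*((2*k + 19)^2) := by
      ring_nf; nlinarith [sq_nonneg k, Nat.zero_le k]
    calc (2*(k+1) + 19)^2 ≤ 2*((2*k + 19)^2) := h1
      _ < 2 * 2^(k+9) := by omega
      _ = 2^(k+1+9) := by ring

end S9

open S9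

theorem stmt9 {V : Type} [Fintype V] (E : V → V → Prop) (hT : IsTournament E)
    (hn : 10 ≤ Fintype.card V) :
    ∃ W : ℝ → ℝ → ℝ, IsTournamenton W ∧ IsRegularT W ∧
      (2 : ℝ) ^ (-((Fintype.card V).choose 2 : ℤ)) < homDensity E W := by
  classical
  set n := Fintype.card V with hn_def
  set N := 2 * n - 1 with hN_def
  have hNn : n ≤ N := by omega
  have hN0 : 0 < N := by omega
  have hNR : (N : ℝ) = 2 * (n:ℝ) - 1 := by
    have : (N : ℕ) = 2 * n - 1 := hN_def
    push_cast [this, Nat.cast_sub (by omega : 1 ≤ 2*n)]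
    ring
  have hnR : (10:ℝ) ≤ (n:ℝ) := by exact_mod_cast hn
  have hn1 : (n:ℝ) - 1 ≠ 0 := by linarith
  have hVne : Nonempty V := Fintype.card_pos_iff.1 (by omega)
  let e : V ≃ Fin n := Fintype.equivFin V
  let ev : ℕ → V := fun i => if h : i < n then e.symm ⟨i, h⟩ else Classical.arbitrary V
  let g : V → ℕ := fun v => (e v : ℕ)
  have hg_lt : ∀ v, g v < n := fun v => (e v).isLt
  have h_evg : ∀ v, ev (g v) = v := by
    intro v
    simp only [ev, g, dif_pos (hg_lt v)]
    simp
  have hg_inj : Function.Injective g := by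
    intro u v huv
    have := congrArg ev huv
    rwa [h_evg, h_evg] at this
  -- degrees
  let D : V → ℕ := fun u => (Finset.univ.filter (fun v => E u v)).card
  have h_gev : ∀ i, i < n → g (ev i) = i := by
    intro i hi
    simp only [ev, g, dif_pos hi]
    simp
  have hev_inj : ∀ i, i < n → ∀ j, j < n → ev i = ev j → i = j := by
    intro i hi j hj hij
    have := congrArg g hij
    rwa [h_gev i hi, h_gev j hj] at this
  have hD_le : ∀ u, (D u : ℝ) ≤ (n:ℝ) - 1 := by
    intro u
    have h1 : D u ≤ n - 1 := by
      have hsub : Finset.univ.filter (fun v => E u v) ⊆ Finset.univ.erase u := by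
        intro v hv
        rw [Finset.mem_filter] at hv
        refine Finset.mem_erase.2 ⟨?_, Finset.mem_univ _⟩
        rintro rfl
        exact hT.1 _ hv.2
      calc D u ≤ (Finset.univ.erase u).card := Finset.card_le_card hsub
        _ = n - 1 := by rw [Finset.card_erase_of_mem (Finset.mem_univ _), Finset.card_univ]
    calc (D u : ℝ) ≤ ((n - 1 : ℕ) : ℝ) := by exact_mod_cast h1
      _ = (n:ℝ) - 1 := by push_cast [Nat.cast_sub (by omega : 1 ≤ n)]; ring
  have hDs : ∀ u : V, (D u : ℝ) = ∑ v : V, (if E u v then (1:ℝ) else 0) := by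
    intro u
    simp [D, Finset.sum_boole]
  have hDsum : ∑ u : V, (D u : ℝ) = (n:ℝ) * ((n:ℝ) - 1) / 2 := by
    have hkey : ∀ u v : V, ((if E u v then (1:ℝ) else 0) + (if E v u then 1 else 0))
        = if u = v then 0 else 1 := by
      intro u v
      by_cases h : u = v
      · subst h; simp [hT.1 u]
      · by_cases hE : E u v
        · simp [h, hE, (hT.2 u v h).1 hE]
        · have : E v u := by
            by_contra hvu
            exact hE ((hT.2 u v h).2 hvu)
          simp [h, hE, this]
    have hDs : ∀ u : V, (D u : ℝ) = ∑ v : V, (if E u v then (1:ℝ) else 0) := by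
      intro u
      simp [D, Finset.sum_boole]
    have h2 : (∑ u : V, (D u : ℝ)) * 2 = (n:ℝ) * ((n:ℝ) - 1) := by
      have hcomm : ∑ u : V, ∑ v : V, (if E v u then (1:ℝ) else 0)
          = ∑ u : V, ∑ v : V, (if E u v then (1:ℝ) else 0) := Finset.sum_comm
      calc (∑ u : V, (D u : ℝ)) * 2
          = ∑ u : V, ∑ v : V, ((if E u v then (1:ℝ) else 0) + (if E v u then 1 else 0)) := by
            simp only [Finset.sum_add_distrib, hcomm, ← hDs, Finset.sum_mul]
            rw [← Finset.sum_add_distrib]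
            exact Finset.sum_congr rfl (fun _ _ => by ring)
        _ = ∑ u : V, ∑ v : V, (if u = v then (0:ℝ) else 1) := by
            exact Finset.sum_congr rfl fun u _ => Finset.sum_congr rfl fun v _ => hkey u v
        _ = ∑ u : V, ((n:ℝ) - 1) := by
            refine Finset.sum_congr rfl fun u _ => ?_
            have : ∀ v : V, (if u = v then (0:ℝ) else 1) = 1 - (if u = v then 1 else 0) := by
              intro v; split <;> ring
            simp only [this, Finset.sum_sub_distrib, Finset.sum_const, Finset.card_univ,
              Finset.sum_ite_eq, Finset.mem_univ, if_true]
            simp [hn_def]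
        _ = (n:ℝ) * ((n:ℝ) - 1) := by
            rw [Finset.sum_const, Finset.card_univ]
            simp [hn_def]
            try ring
    linarith
  -- the matrix
  let t : ℕ → ℝ := fun i => ((n:ℝ) - 1 - (D (ev i) : ℝ)) / ((n:ℝ) - 1)
  have ht01 : ∀ i, 0 ≤ t i ∧ t i ≤ 1 := by
    intro i
    have h1 := hD_le (ev i)
    have h2 : (0:ℝ) ≤ (D (ev i) : ℝ) := Nat.cast_nonneg _
    constructor
    · apply div_nonneg (by linarith) (by linarith)
    · rw [div_le_one (by linarith)]; linarith
  let A : ℕ → ℕ → ℝ := fun i j =>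
    if i = j then 1/2
    else if i < n then (if j < n then (if E (ev i) (ev j) then 1 else 0) else t i)
    else if j < n then 1 - t j
    else 1/2
  have hA01 : ∀ i j, 0 ≤ A i j ∧ A i j ≤ 1 := by
    intro i j
    simp only [A]
    split
    · norm_num
    · split
      · split
        · split <;> norm_num
        · exact ht01 i
      · split
        · have := ht01 j; constructor <;> [linarith [this.2]; linarith [this.1]]
        · norm_num
  have hAsym : ∀ i j, A i j + A j i = 1 := by
    intro i j
    by_cases hij : i = j
    · subst hij; simp only [A, if_pos rfl]; norm_num
    have hji : j ≠ i := Ne.symm hij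
    simp only [A, if_neg hij, if_neg hji]
    by_cases hi : i < n <;> by_cases hj : j < n <;> simp only [hi, hj, if_true, if_false]
    · have hne : ev i ≠ ev j := fun h => hij (hev_inj i hi j hj h)
      by_cases hE : E (ev i) (ev j)
      · simp [hE, (hT.2 _ _ hne).1 hE]
      · have : E (ev j) (ev i) := by
          by_contra hvu
          exact hE ((hT.2 _ _ hne).2 hvu)
        simp [hE, this]
    · ring
    · ring
    · norm_num
  have hreindex : ∀ F : V → ℝ, ∑ k ∈ Finset.range n, F (ev k) = ∑ v : V, F v := by
    intro F
    refine Finset.sum_nbij' (i := fun k => ev k) (j := fun v => g v) ?_ ?_ ?_ ?_ ?_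
    · intro k _; exact Finset.mem_univ _
    · intro v _; exact Finset.mem_range.2 (hg_lt v)
    · intro k hk; exact h_gev k (Finset.mem_range.1 hk)
    · intro v _; exact h_evg v
    · intro k _; rfl
  have hArow : ∀ i, ∑ k ∈ Finset.range N, A i k = (N : ℝ) / 2 := by
    intro i
    have hsplit : ∑ k ∈ Finset.range N, A i k
        = ∑ k ∈ Finset.range n, A i k + ∑ k ∈ Finset.Ico n N, A i k := by
      rw [Finset.range_eq_Ico, ← Finset.sum_Ico_consecutive _ (Nat.zero_le n) hNn,
        ← Finset.range_eq_Ico]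
    by_cases hi : i < n
    · have h1 : ∑ k ∈ Finset.range n, A i k = 1/2 + (D (ev i) : ℝ) := by
        have hmem : i ∈ Finset.range n := Finset.mem_range.2 hi
        rw [← Finset.add_sum_erase _ _ hmem]
        have hAii : A i i = 1/2 := by simp [A]
        have hrest : ∑ k ∈ (Finset.range n).erase i, A i k
            = ∑ k ∈ (Finset.range n).erase i, (if E (ev i) (ev k) then (1:ℝ) else 0) := by
          refine Finset.sum_congr rfl fun k hk => ?_
          obtain ⟨hki, hkn⟩ := Finset.mem_erase.1 hk
          have hkn' : k < n := Finset.mem_range.1 hkn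
          simp only [A, if_neg (Ne.symm hki), if_pos hi, if_pos hkn']
        rw [hAii, hrest, Finset.sum_erase _ (by simp [hT.1 (ev i)])]
        rw [hreindex (fun v => if E (ev i) v then (1:ℝ) else 0), ← hDs (ev i)]
      have h2 : ∑ k ∈ Finset.Ico n N, A i k = ((n:ℝ) - 1) * t i := by
        have hconst : ∀ k ∈ Finset.Ico n N, A i k = t i := by
          intro k hk
          obtain ⟨hnk, hkN⟩ := Finset.mem_Ico.1 hk
          have hik : i ≠ k := by omega
          simp only [A, if_neg hik, if_pos hi, if_neg (by omega : ¬ k < n)]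
        rw [Finset.sum_congr rfl hconst, Finset.sum_const, Nat.card_Ico, nsmul_eq_mul]
        have hc : ((N - n : ℕ) : ℝ) = (n:ℝ) - 1 := by
          have h' : N - n = n - 1 := by omega
          rw [h', Nat.cast_sub (by omega : 1 ≤ n)]
          norm_num
        rw [hc]
      have hti : ((n:ℝ) - 1) * t i = (n:ℝ) - 1 - (D (ev i) : ℝ) := by
        simp only [t]
        field_simp
      rw [hsplit, h1, h2, hti]
      rw [hNR]
      ring
    · have h1 : ∑ k ∈ Finset.range n, A i k = (n:ℝ) - ∑ k ∈ Finset.range n, t k := by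
        have hconst : ∀ k ∈ Finset.range n, A i k = 1 - t k := by
          intro k hk
          have hkn := Finset.mem_range.1 hk
          have hik : i ≠ k := by omega
          simp only [A, if_neg hik, if_neg hi, if_pos hkn]
        rw [Finset.sum_congr rfl hconst, Finset.sum_sub_distrib, Finset.sum_const,
          Finset.card_range, nsmul_eq_mul, mul_one]
      have hts : ∑ k ∈ Finset.range n, t k = (n:ℝ)/2 := by
        calc ∑ k ∈ Finset.range n, t k
            = ∑ v : V, ((n:ℝ) - 1 - (D v : ℝ)) / ((n:ℝ) - 1) :=
              hreindex (fun v => ((n:ℝ) - 1 - (D v : ℝ)) / ((n:ℝ) - 1))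
          _ = (∑ v : V, ((n:ℝ) - 1 - (D v : ℝ))) / ((n:ℝ) - 1) := by rw [Finset.sum_div]
          _ = ((n:ℝ) * ((n:ℝ)-1) - (n:ℝ)*((n:ℝ)-1)/2) / ((n:ℝ)-1) := by
              rw [Finset.sum_sub_distrib, hDsum, Finset.sum_const, Finset.card_univ]
              have : ((Fintype.card V : ℕ) : ℝ) = (n:ℝ) := by rw [← hn_def]
              rw [nsmul_eq_mul, this]
              try ring_nf
          _ = (n:ℝ)/2 := by
              rw [div_eq_iff hn1]
              ring
      have h2 : ∑ k ∈ Finset.Ico n N, A i k = ((n:ℝ) - 1) / 2 := by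
        have hconst : ∀ k ∈ Finset.Ico n N, A i k = 1/2 := by
          intro k hk
          obtain ⟨hnk, hkN⟩ := Finset.mem_Ico.1 hk
          by_cases hik : i = k
          · simp [A, hik]
          · simp only [A, if_neg hik, if_neg hi, if_neg (by omega : ¬ k < n)]
        rw [Finset.sum_congr rfl hconst, Finset.sum_const, Nat.card_Ico, nsmul_eq_mul]
        have hc : ((N - n : ℕ) : ℝ) = (n:ℝ) - 1 := by
          have h' : N - n = n - 1 := by omega
          rw [h', Nat.cast_sub (by omega : 1 ≤ n)]
          norm_num
        rw [hc]
        ring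
      rw [hsplit, h1, hts, h2, hNR]
      ring
  -- the tournamenton
  have hWm : Measurable (Function.uncurry (fun x y => A (bIdx N x) (bIdx N y))) := by
    have h1 : Measurable (fun p : ℝ × ℝ => (bIdx N p.1, bIdx N p.2)) :=
      ((measurable_bIdx N).comp measurable_fst).prodMk ((measurable_bIdx N).comp measurable_snd)
    exact (measurable_of_countable (fun q : ℕ × ℕ => A q.1 q.2)).comp h1
  refine ⟨fun x y => A (bIdx N x) (bIdx N y), ⟨?_, ?_⟩, ?_, ?_⟩
  · exact hWm
  · intro x _ y _
    exact ⟨(hA01 _ _).1, (hA01 _ _).2, hAsym _ _⟩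
  · -- regular
    apply Filter.Eventually.of_forall
    intro x _
    show (∫ y in I01, A (bIdx N x) (bIdx N y)) = 1/2
    rw [show I01 = Set.Icc (0:ℝ) 1 from rfl, integral_step hN0, hArow (bIdx N x)]
    have hNR0 : (N:ℝ) ≠ 0 := by rw [hNR]; linarith
    field_simp
  · -- density
    set C := n.choose 2 with hC_def
    set F : (V → ℝ) → ℝ := fun x =>
      ∏ p ∈ Finset.univ.filter (fun p : V × V => E p.1 p.2),
        A (bIdx N (x p.1)) (bIdx N (x p.2)) with hF_def
    have hhd : homDensity E (fun x y => A (bIdx N x) (bIdx N y))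
        = ∫ x in Set.univ.pi (fun _ : V => I01), F x := rfl
    set box : Set (V → ℝ) :=
      Set.univ.pi (fun v => Set.Ico ((g v : ℝ)/N) (((g v : ℝ)+1)/N)) with hbox_def
    have hNR' : (0:ℝ) < N := by rw [hNR]; linarith
    have hbox_meas : MeasurableSet box :=
      MeasurableSet.pi (Set.to_countable _) (fun v _ => measurableSet_Ico)
    have hbox_sub : box ⊆ Set.univ.pi (fun _ : V => I01) := by
      intro x hx v _
      have h := hx v (Set.mem_univ v)
      simp only [Set.mem_Ico] at h
      constructor
      · exact le_trans (by positivity) h.1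
      · have hgv : ((g v : ℝ) + 1) ≤ (N:ℝ) := by
          have h' : g v + 1 ≤ N := by have := hg_lt v; omega
          exact_mod_cast h'
        exact h.2.le.trans ((div_le_one hNR').2 hgv)
    have hF_meas : Measurable F := by
      rw [hF_def]
      refine Finset.measurable_prod _ (fun p _ => ?_)
      have hcomp : Measurable (fun x : V → ℝ =>
          Function.uncurry (fun a b => A (bIdx N a) (bIdx N b)) (x p.1, x p.2)) :=
        hWm.comp ((measurable_pi_apply p.1).prodMk (measurable_pi_apply p.2))
      exact hcomp
    have hF0 : ∀ x, 0 ≤ F x := fun x => Finset.prod_nonneg (fun p _ => (hA01 _ _).1)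
    have hF1 : ∀ x, F x ≤ 1 :=
      fun x => Finset.prod_le_one (fun p _ => (hA01 _ _).1) (fun p _ => (hA01 _ _).2)
    have hvol : volume (Set.univ.pi (fun _ : V => I01)) = 1 := by
      rw [volume_pi_pi]
      simp [I01, Real.volume_Icc]
    have hInt : IntegrableOn F (Set.univ.pi (fun _ : V => I01)) volume := by
      refine Integrable.mono' (g := fun _ => (1:ℝ)) ?_ ?_ ?_
      · exact integrableOn_const (by rw [hvol]; norm_num)
      · exact hF_meas.aestronglyMeasurable.restrict
      · exact Filter.Eventually.of_forall
          (fun x => by rw [Real.norm_eq_abs, abs_of_nonneg (hF0 x)]; exact hF1 x)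
    have hbox_one : Set.EqOn F (fun _ => (1:ℝ)) box := by
      intro x hx
      simp only [F]
      apply Finset.prod_eq_one
      intro p hp
      have hE : E p.1 p.2 := (Finset.mem_filter.1 hp).2
      have hne : p.1 ≠ p.2 := by
        intro h
        rw [h] at hE
        exact hT.1 _ hE
      have hb1 : bIdx N (x p.1) = g p.1 :=
        bIdx_eq (lt_of_lt_of_le (hg_lt _) hNn) (hx p.1 (Set.mem_univ _))
      have hb2 : bIdx N (x p.2) = g p.2 :=
        bIdx_eq (lt_of_lt_of_le (hg_lt _) hNn) (hx p.2 (Set.mem_univ _))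
      rw [hb1, hb2]
      have hgne : g p.1 ≠ g p.2 := fun h => hne (hg_inj h)
      have hval : A (g p.1) (g p.2)
          = if E (ev (g p.1)) (ev (g p.2)) then (1:ℝ) else 0 := by
        simp only [A, if_neg hgne, if_pos (hg_lt p.1), if_pos (hg_lt p.2)]
      rw [hval, h_evg p.1, h_evg p.2, if_pos hE]
    have hboxint : ∫ x in box, F x = (1/(N:ℝ))^n := by
      rw [setIntegral_congr_fun hbox_meas hbox_one, setIntegral_const]
      have hvolbox : volume box = ENNReal.ofReal ((1:ℝ)/N) ^ n := by
        rw [hbox_def, volume_pi_pi]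
        have hpiece : ∀ v : V, volume (Set.Ico ((g v : ℝ)/N) (((g v : ℝ)+1)/N))
            = ENNReal.ofReal (1/N) := by
          intro v
          rw [Real.volume_Ico]
          congr 1
          field_simp
          ring
        simp only [hpiece]
        rw [Finset.prod_const, Finset.card_univ, ← hn_def]
      rw [measureReal_def, hvolbox, smul_eq_mul, mul_one, ← ENNReal.ofReal_pow (by positivity),
        ENNReal.toReal_ofReal (by positivity)]
    have hmono : ∫ x in box, F x ≤ ∫ x in Set.univ.pi (fun _ : V => I01), F x := by
      apply setIntegral_mono_set hInt
      · exact Filter.Eventually.of_forall (fun x => hF0 x)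
      · exact HasSubset.Subset.eventuallyLE hbox_sub
    -- numeric inequality
    have h2C : C * 2 = n * (n - 1) := by
      rw [hC_def, Nat.choose_two_right]
      apply Nat.div_mul_cancel
      have h := Nat.even_mul_succ_self (n - 1)
      have hn' : n - 1 + 1 = n := by omega
      rw [hn'] at h
      rw [Nat.mul_comm]
      exact h.two_dvd
    have hNsq : N^2 < 2^(n-1) := by
      have hk := key_num (n - 10)
      have e1 : 2*(n-10) + 19 = N := by omega
      have e2 : (n-10) + 9 = n - 1 := by omega
      rwa [e1, e2] at hk
    have hnum : N ^ n < 2 ^ C := by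
      have hsq : (N^n)^2 < (2^C)^2 := by
        calc (N^n)^2 = (N^2)^n := by ring
          _ < (2^(n-1))^n := Nat.pow_lt_pow_left hNsq (by omega)
          _ = 2^((n-1)*n) := by rw [← pow_mul]
          _ = (2^C)^2 := by rw [← pow_mul, h2C, Nat.mul_comm]
      exact (Nat.pow_lt_pow_iff_left (by norm_num : (2:ℕ) ≠ 0)).1 hsq
    have hfinal : (2:ℝ) ^ (-(C:ℤ)) < (1/(N:ℝ))^n := by
      have h1 : ((N:ℝ))^n < (2:ℝ)^C := by exact_mod_cast hnum
      have h2 : (0:ℝ) < ((N:ℝ))^n := by positivity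
      rw [zpow_neg, zpow_natCast, one_div, inv_pow]
      rw [← one_div, ← one_div]
      exact one_div_lt_one_div_of_lt h2 h1
    rw [hhd]
    calc (2:ℝ) ^ (-(C:ℤ)) < (1/(N:ℝ))^n := hfinal
      _ = ∫ x in box, F x := hboxint.symm
      _ ≤ _ := hmono

end
end

section
/- Every tournamenton W satisfies t(C₃, W) ≤ 1/8, where C₃ is the cyclically oriented triangle, and equality holds if and only if W is regular. -/
open MeasureTheory

noncomputable section

section Stmt11Aux
open MeasureTheory Function Set

set_option linter.unusedSectionVars false

/-- The reference probability measure: Lebesgue restricted to `[0,1]`. -/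
noncomputable def μ0 : Measure ℝ := volume.restrict I01

instance : IsProbabilityMeasure μ0 := ⟨by simp [μ0, I01, Real.volume_Icc]⟩

lemma integrable_bdd {α : Type*} [MeasurableSpace α] {ν : Measure α} [IsFiniteMeasure ν]
    {f : α → ℝ} (hf : AEStronglyMeasurable f ν) {C : ℝ} (h : ∀ x, |f x| ≤ C) :
    Integrable f ν :=
  (integrable_const C).mono' hf (Filter.Eventually.of_forall h)

lemma abs3 {a b c : ℝ} (ha : |a| ≤ 1) (hb : |b| ≤ 1) (hc : |c| ≤ 1) : |a * b * c| ≤ 1 := by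
  rw [abs_mul, abs_mul]
  have h1 : |a| * |b| ≤ 1 := mul_le_one₀ ha (abs_nonneg b) hb
  exact mul_le_one₀ h1 (abs_nonneg c) hc

lemma abs2 {a b : ℝ} (ha : |a| ≤ 1) (hb : |b| ≤ 1) : |a * b| ≤ 1 := by
  rw [abs_mul]; exact mul_le_one₀ ha (abs_nonneg b) hb

section V
variable (V : ℝ → ℝ → ℝ)

/-- Out-degree function. -/
noncomputable def dg : ℝ → ℝ := fun x => ∫ y, V x y ∂μ0

variable (hV : Measurable (uncurry V)) (hb : ∀ x y, 0 ≤ V x y ∧ V x y ≤ 1)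
  (hs : ∀ x y, V x y + V y x = 1)

include hV in
lemma dg_meas : Measurable (dg V) := by
  have := hV.stronglyMeasurable.integral_prod_right' (ν := μ0)
  exact this.measurable

include hV in
lemma intV_left (hb : ∀ x y, 0 ≤ V x y ∧ V x y ≤ 1) (x : ℝ) :
    Integrable (fun y => V x y) μ0 := by
  refine integrable_bdd hV.of_uncurry_left.aestronglyMeasurable (C := 1) fun y => ?_
  rw [abs_le]; constructor <;> linarith [(hb x y).1, (hb x y).2]

include hV hb hs in
lemma dg_bd (x : ℝ) : 0 ≤ dg V x ∧ dg V x ≤ 1 := by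
  constructor
  · exact integral_nonneg fun y => (hb x y).1
  · have h : dg V x ≤ ∫ _, (1:ℝ) ∂μ0 :=
      integral_mono (intV_left V hV hb x) (integrable_const 1) fun y => (hb x y).2
    simpa using h

include hV hb hs in
lemma col (x : ℝ) : (∫ y, V y x ∂μ0) = 1 - dg V x := by
  have h1 : (fun y => V y x) = fun y => 1 - V x y := by
    funext y; linarith [hs x y]
  rw [h1, integral_sub (integrable_const 1) (intV_left V hV hb x)]
  simp [dg]

lemma swap2 (F : ℝ → ℝ → ℝ) (hF : Measurable (uncurry F)) (hFb : ∀ x y, |F x y| ≤ 1) :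
    (∫ x, ∫ y, F x y ∂μ0 ∂μ0) = ∫ y, ∫ x, F x y ∂μ0 ∂μ0 :=
  integral_integral_swap (integrable_bdd hF.aestronglyMeasurable (fun p => hFb p.1 p.2))

lemma tint (F : ℝ → ℝ → ℝ → ℝ)
    (hm : Measurable fun p : ℝ × ℝ × ℝ => F p.1 p.2.1 p.2.2)
    (hbd : ∀ x y z, |F x y z| ≤ 1) :
    (∫ p : ℝ × ℝ × ℝ, F p.1 p.2.1 p.2.2 ∂(μ0.prod (μ0.prod μ0)))
      = ∫ x, ∫ y, ∫ z, F x y z ∂μ0 ∂μ0 ∂μ0 := by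
  rw [integral_prod _ (integrable_bdd hm.aestronglyMeasurable fun p => hbd _ _ _)]
  refine integral_congr_ae (Filter.Eventually.of_forall fun x => ?_)
  have hmx : Measurable fun q : ℝ × ℝ => F x q.1 q.2 :=
    hm.comp (measurable_const.prodMk measurable_id)
  exact integral_prod _ (integrable_bdd hmx.aestronglyMeasurable fun q => hbd _ _ _)

include hV hb hs in
lemma dg_half : (∫ x, dg V x ∂μ0) = 1 / 2 := by
  have hd := dg_meas V hV
  have hdb := dg_bd V hV hb hs
  have habs : ∀ x y, |V x y| ≤ 1 := fun x y => by
    rw [abs_le]; constructor <;> linarith [(hb x y).1, (hb x y).2]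
  have hdabs : ∀ x, |dg V x| ≤ 1 := fun x => by
    rw [abs_le]; constructor <;> linarith [(hdb x).1, (hdb x).2]
  have intd : Integrable (dg V) μ0 := integrable_bdd hd.aestronglyMeasurable hdabs
  have h : (∫ x, ∫ y, V x y ∂μ0 ∂μ0) = ∫ y, ∫ x, V x y ∂μ0 ∂μ0 := swap2 V hV habs
  simp_rw [col V hV hb hs] at h
  rw [integral_sub (integrable_const 1) intd] at h
  simp only [integral_const, measure_univ, probReal_univ, ENNReal.toReal_one, smul_eq_mul, one_mul] at h
  have h2 : (∫ x, dg V x ∂μ0) = 1 - ∫ x, dg V x ∂μ0 := h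
  linarith

include hV hb hs in
lemma cyclic_eval :
    (∫ x, ∫ y, ∫ z, V x y * V y z * V z x ∂μ0 ∂μ0 ∂μ0)
      = 1 / 2 - 3 / 2 * ∫ x, dg V x ^ 2 ∂μ0 := by
  have hd := dg_meas V hV
  have hdb := dg_bd V hV hb hs
  have habs : ∀ x y, |V x y| ≤ 1 := fun x y => by
    rw [abs_le]; constructor <;> linarith [(hb x y).1, (hb x y).2]
  have hdabs : ∀ x, |dg V x| ≤ 1 := fun x => by
    rw [abs_le]; constructor <;> linarith [(hdb x).1, (hdb x).2]
  have intd : Integrable (dg V) μ0 := integrable_bdd hd.aestronglyMeasurable hdabs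
  have intd2 : Integrable (fun x => dg V x ^ 2) μ0 := by
    refine integrable_bdd (hd.pow_const 2).aestronglyMeasurable (C := 1) fun x => ?_
    rw [pow_two]; exact abs2 (hdabs x) (hdabs x)
  have hDhalf : (∫ x, dg V x ∂μ0) = 1 / 2 := dg_half V hV hb hs
  set Q := ∫ x, (1 - dg V x) * dg V x ∂μ0 with hQdef
  have hQ : Q = 1 / 2 - ∫ x, dg V x ^ 2 ∂μ0 := by
    have h1 : (fun x => (1 - dg V x) * dg V x) = fun x => dg V x - dg V x ^ 2 := by
      funext x; ring
    rw [hQdef, h1, integral_sub intd intd2, hDhalf]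
  have m1 : Measurable fun p : ℝ × ℝ × ℝ => p.1 := measurable_fst
  have m2 : Measurable fun p : ℝ × ℝ × ℝ => p.2.1 := measurable_fst.comp measurable_snd
  have m3 : Measurable fun p : ℝ × ℝ × ℝ => p.2.2 := measurable_snd.comp measurable_snd
  have mab : Measurable fun p : ℝ × ℝ × ℝ => V p.1 p.2.1 := hV.comp (m1.prodMk m2)
  have mbc : Measurable fun p : ℝ × ℝ × ℝ => V p.2.1 p.2.2 := hV.comp (m2.prodMk m3)
  have mca : Measurable fun p : ℝ × ℝ × ℝ => V p.2.2 p.1 := hV.comp (m3.prodMk m1)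
  have mba : Measurable fun p : ℝ × ℝ × ℝ => V p.2.1 p.1 := hV.comp (m2.prodMk m1)
  have mcb : Measurable fun p : ℝ × ℝ × ℝ => V p.2.2 p.2.1 := hV.comp (m3.prodMk m2)
  have mac : Measurable fun p : ℝ × ℝ × ℝ => V p.1 p.2.2 := hV.comp (m1.prodMk m3)
  set π := μ0.prod (μ0.prod μ0) with hπ
  have ia : Integrable (fun p : ℝ × ℝ × ℝ => V p.1 p.2.1) π :=
    integrable_bdd mab.aestronglyMeasurable fun p => habs _ _
  have ib : Integrable (fun p : ℝ × ℝ × ℝ => V p.2.1 p.2.2) π :=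
    integrable_bdd mbc.aestronglyMeasurable fun p => habs _ _
  have ic : Integrable (fun p : ℝ × ℝ × ℝ => V p.2.2 p.1) π :=
    integrable_bdd mca.aestronglyMeasurable fun p => habs _ _
  have iab : Integrable (fun p : ℝ × ℝ × ℝ => V p.1 p.2.1 * V p.2.1 p.2.2) π :=
    integrable_bdd (mab.mul mbc).aestronglyMeasurable fun p => abs2 (habs _ _) (habs _ _)
  have ibc : Integrable (fun p : ℝ × ℝ × ℝ => V p.2.1 p.2.2 * V p.2.2 p.1) π :=
    integrable_bdd (mbc.mul mca).aestronglyMeasurable fun p => abs2 (habs _ _) (habs _ _)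
  have ica : Integrable (fun p : ℝ × ℝ × ℝ => V p.2.2 p.1 * V p.1 p.2.1) π :=
    integrable_bdd (mca.mul mab).aestronglyMeasurable fun p => abs2 (habs _ _) (habs _ _)
  have iabc : Integrable (fun p : ℝ × ℝ × ℝ => V p.1 p.2.1 * V p.2.1 p.2.2 * V p.2.2 p.1) π :=
    integrable_bdd ((mab.mul mbc).mul mca).aestronglyMeasurable
      fun p => abs3 (habs _ _) (habs _ _) (habs _ _)
  have iabc' : Integrable (fun p : ℝ × ℝ × ℝ => V p.2.1 p.1 * V p.2.2 p.2.1 * V p.1 p.2.2) π :=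
    integrable_bdd ((mba.mul mcb).mul mac).aestronglyMeasurable
      fun p => abs3 (habs _ _) (habs _ _) (habs _ _)
  have Ea : (∫ p : ℝ × ℝ × ℝ, V p.1 p.2.1 ∂π) = 1 / 2 := by
    rw [hπ, tint (fun x y _ => V x y) mab fun x y z => habs x y]
    simp_rw [integral_const, probReal_univ, one_smul]
    exact hDhalf
  have Eb : (∫ p : ℝ × ℝ × ℝ, V p.2.1 p.2.2 ∂π) = 1 / 2 := by
    rw [hπ, tint (fun _ y z => V y z) mbc fun x y z => habs y z]
    have h : (∫ y, ∫ z, V y z ∂μ0 ∂μ0) = 1 / 2 := hDhalf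
    rw [integral_const, h]
    simp
  have Ec : (∫ p : ℝ × ℝ × ℝ, V p.2.2 p.1 ∂π) = 1 / 2 := by
    rw [hπ, tint (fun x _ z => V z x) mca fun x y z => habs z x]
    simp_rw [col V hV hb hs, integral_const, probReal_univ, one_smul]
    rw [integral_sub (integrable_const 1) intd, hDhalf]
    simp
    norm_num
  have Eab : (∫ p : ℝ × ℝ × ℝ, V p.1 p.2.1 * V p.2.1 p.2.2 ∂π) = Q := by
    rw [hπ, tint (fun x y z => V x y * V y z) (mab.mul mbc)
      fun x y z => abs2 (habs _ _) (habs _ _)]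
    simp_rw [integral_const_mul]
    have hm : Measurable (uncurry fun x y => V x y * dg V y) :=
      hV.mul (hd.comp measurable_snd)
    show (∫ x, ∫ y, V x y * dg V y ∂μ0 ∂μ0) = Q
    rw [swap2 _ hm fun x y => abs2 (habs _ _) (hdabs _)]
    simp_rw [integral_mul_const, col V hV hb hs]
    rfl
  have Ebc : (∫ p : ℝ × ℝ × ℝ, V p.2.1 p.2.2 * V p.2.2 p.1 ∂π) = Q := by
    rw [hπ, tint (fun x y z => V y z * V z x) (mbc.mul mca)
      fun x y z => abs2 (habs _ _) (habs _ _)]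
    have step1 : ∀ x : ℝ, (∫ y, ∫ z, V y z * V z x ∂μ0 ∂μ0)
        = ∫ z, (1 - dg V z) * V z x ∂μ0 := by
      intro x
      have hm : Measurable (uncurry fun y z => V y z * V z x) :=
        hV.mul (hV.of_uncurry_right.comp measurable_snd)
      rw [swap2 _ hm fun y z => abs2 (habs _ _) (habs _ _)]
      simp_rw [integral_mul_const, col V hV hb hs]
    simp_rw [step1]
    have hm2 : Measurable (uncurry fun x z => (1 - dg V z) * V z x) := by
      apply Measurable.mul
      · exact (measurable_const.sub (hd.comp measurable_snd))
      · exact hV.comp (measurable_snd.prodMk measurable_fst)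
    rw [swap2 _ hm2 fun x z => abs2 (by rw [abs_le]; constructor <;>
      [linarith [(hdb z).2]; linarith [(hdb z).1]]) (habs _ _)]
    simp_rw [integral_const_mul]
    rfl
  have Eca : (∫ p : ℝ × ℝ × ℝ, V p.2.2 p.1 * V p.1 p.2.1 ∂π) = Q := by
    rw [hπ, tint (fun x y z => V z x * V x y) (mca.mul mab)
      fun x y z => abs2 (habs _ _) (habs _ _)]
    simp_rw [integral_mul_const, col V hV hb hs, integral_const_mul]
    rfl
  have hSS' : (∫ p : ℝ × ℝ × ℝ, V p.1 p.2.1 * V p.2.1 p.2.2 * V p.2.2 p.1 ∂π)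
      = ∫ p : ℝ × ℝ × ℝ, V p.2.1 p.1 * V p.2.2 p.2.1 * V p.1 p.2.2 ∂π := by
    rw [hπ, tint (fun x y z => V x y * V y z * V z x) ((mab.mul mbc).mul mca)
      (fun x y z => abs3 (habs _ _) (habs _ _) (habs _ _)),
      tint (fun x y z => V y x * V z y * V x z) ((mba.mul mcb).mul mac)
      (fun x y z => abs3 (habs _ _) (habs _ _) (habs _ _))]
    refine integral_congr_ae (Filter.Eventually.of_forall fun x => ?_)
    have hm : Measurable (uncurry fun y z => V y x * V z y * V x z) := by
      apply Measurable.mul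
      · exact (hV.of_uncurry_right.comp measurable_fst).mul
          (hV.comp (measurable_snd.prodMk measurable_fst))
      · exact hV.of_uncurry_left.comp measurable_snd
    dsimp only
    rw [swap2 _ hm fun y z => abs3 (habs _ _) (habs _ _) (habs _ _)]
    refine integral_congr_ae (Filter.Eventually.of_forall fun y => ?_)
    refine integral_congr_ae (Filter.Eventually.of_forall fun z => ?_)
    ring
  have key : (∫ p : ℝ × ℝ × ℝ, V p.1 p.2.1 * V p.2.1 p.2.2 * V p.2.2 p.1 ∂π)
      + (∫ p : ℝ × ℝ × ℝ, V p.2.1 p.1 * V p.2.2 p.2.1 * V p.1 p.2.2 ∂π)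
      = 1 - 1 / 2 - 1 / 2 - 1 / 2 + (Q + Q + Q) := by
    rw [← integral_add iabc iabc']
    have hpt : (fun p : ℝ × ℝ × ℝ => V p.1 p.2.1 * V p.2.1 p.2.2 * V p.2.2 p.1
        + V p.2.1 p.1 * V p.2.2 p.2.1 * V p.1 p.2.2)
        = fun p : ℝ × ℝ × ℝ => 1 - V p.1 p.2.1 - V p.2.1 p.2.2 - V p.2.2 p.1
          + (V p.1 p.2.1 * V p.2.1 p.2.2 + V p.2.1 p.2.2 * V p.2.2 p.1
            + V p.2.2 p.1 * V p.1 p.2.1) := by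
      funext p
      have h1 : V p.2.1 p.1 = 1 - V p.1 p.2.1 := by linarith [hs p.1 p.2.1]
      have h2 : V p.2.2 p.2.1 = 1 - V p.2.1 p.2.2 := by linarith [hs p.2.1 p.2.2]
      have h3 : V p.1 p.2.2 = 1 - V p.2.2 p.1 := by linarith [hs p.2.2 p.1]
      rw [h1, h2, h3]; ring
    rw [hpt]
    have split1 : (∫ p : ℝ × ℝ × ℝ, 1 - V p.1 p.2.1 - V p.2.1 p.2.2 - V p.2.2 p.1
          + (V p.1 p.2.1 * V p.2.1 p.2.2 + V p.2.1 p.2.2 * V p.2.2 p.1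
            + V p.2.2 p.1 * V p.1 p.2.1) ∂π)
        = (∫ p : ℝ × ℝ × ℝ, 1 - V p.1 p.2.1 - V p.2.1 p.2.2 - V p.2.2 p.1 ∂π)
          + ∫ p : ℝ × ℝ × ℝ, V p.1 p.2.1 * V p.2.1 p.2.2 + V p.2.1 p.2.2 * V p.2.2 p.1
            + V p.2.2 p.1 * V p.1 p.2.1 ∂π :=
      integral_add ((((integrable_const 1).sub ia).sub ib).sub ic) ((iab.add ibc).add ica)
    have split2 : (∫ p : ℝ × ℝ × ℝ, 1 - V p.1 p.2.1 - V p.2.1 p.2.2 - V p.2.2 p.1 ∂π)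
        = (∫ p : ℝ × ℝ × ℝ, 1 - V p.1 p.2.1 - V p.2.1 p.2.2 ∂π)
          - ∫ p : ℝ × ℝ × ℝ, V p.2.2 p.1 ∂π :=
      integral_sub (((integrable_const 1).sub ia).sub ib) ic
    have split3 : (∫ p : ℝ × ℝ × ℝ, 1 - V p.1 p.2.1 - V p.2.1 p.2.2 ∂π)
        = (∫ p : ℝ × ℝ × ℝ, 1 - V p.1 p.2.1 ∂π) - ∫ p : ℝ × ℝ × ℝ, V p.2.1 p.2.2 ∂π :=
      integral_sub ((integrable_const 1).sub ia) ib
    have split4 : (∫ p : ℝ × ℝ × ℝ, (1:ℝ) - V p.1 p.2.1 ∂π)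
        = (∫ _ : ℝ × ℝ × ℝ, (1:ℝ) ∂π) - ∫ p : ℝ × ℝ × ℝ, V p.1 p.2.1 ∂π :=
      integral_sub (integrable_const 1) ia
    have split5 : (∫ p : ℝ × ℝ × ℝ, V p.1 p.2.1 * V p.2.1 p.2.2
          + V p.2.1 p.2.2 * V p.2.2 p.1 + V p.2.2 p.1 * V p.1 p.2.1 ∂π)
        = (∫ p : ℝ × ℝ × ℝ, V p.1 p.2.1 * V p.2.1 p.2.2
            + V p.2.1 p.2.2 * V p.2.2 p.1 ∂π)
          + ∫ p : ℝ × ℝ × ℝ, V p.2.2 p.1 * V p.1 p.2.1 ∂π :=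
      integral_add (iab.add ibc) ica
    have split6 : (∫ p : ℝ × ℝ × ℝ, V p.1 p.2.1 * V p.2.1 p.2.2
          + V p.2.1 p.2.2 * V p.2.2 p.1 ∂π)
        = (∫ p : ℝ × ℝ × ℝ, V p.1 p.2.1 * V p.2.1 p.2.2 ∂π)
          + ∫ p : ℝ × ℝ × ℝ, V p.2.1 p.2.2 * V p.2.2 p.1 ∂π :=
      integral_add iab ibc
    rw [split1, split2, split3, split4, split5, split6, integral_const,
      Ea, Eb, Ec, Eab, Ebc, Eca]
    simp
  rw [← hSS'] at key
  have hS : (∫ x, ∫ y, ∫ z, V x y * V y z * V z x ∂μ0 ∂μ0 ∂μ0)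
      = ∫ p : ℝ × ℝ × ℝ, V p.1 p.2.1 * V p.2.1 p.2.2 * V p.2.2 p.1 ∂π := by
    rw [hπ, tint (fun x y z => V x y * V y z * V z x) ((mab.mul mbc).mul mca)
      (fun x y z => abs3 (habs _ _) (habs _ _) (habs _ _))]
  rw [hS]
  linarith [hQ, key]

include hV hb hs in
lemma cyclic_final :
    (∫ x, ∫ y, ∫ z, V x y * V y z * V z x ∂μ0 ∂μ0 ∂μ0)
      = 1 / 8 - 3 / 2 * ∫ x, (dg V x - 1 / 2) ^ 2 ∂μ0 := by
  rw [cyclic_eval V hV hb hs]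
  have hd := dg_meas V hV
  have hdb := dg_bd V hV hb hs
  have hdabs : ∀ x, |dg V x| ≤ 1 := fun x => by
    rw [abs_le]; constructor <;> linarith [(hdb x).1, (hdb x).2]
  have intd : Integrable (dg V) μ0 := integrable_bdd hd.aestronglyMeasurable hdabs
  have intd2 : Integrable (fun x => dg V x ^ 2) μ0 := by
    refine integrable_bdd (hd.pow_const 2).aestronglyMeasurable (C := 1) fun x => ?_
    rw [pow_two]; exact abs2 (hdabs x) (hdabs x)
  have hexp : (∫ x, (dg V x - 1 / 2) ^ 2 ∂μ0) = (∫ x, dg V x ^ 2 ∂μ0) - 1 / 4 := by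
    have h1 : (fun x => (dg V x - 1 / 2) ^ 2)
        = fun x => dg V x ^ 2 - dg V x + 1 / 4 := by
      funext x; ring
    have s1 : (∫ x, (dg V x ^ 2 - dg V x + 1 / 4) ∂μ0)
        = (∫ x, dg V x ^ 2 - dg V x ∂μ0) + ∫ _, (1 / 4 : ℝ) ∂μ0 :=
      integral_add (intd2.sub intd) (integrable_const _)
    have s2 : (∫ x, dg V x ^ 2 - dg V x ∂μ0)
        = (∫ x, dg V x ^ 2 ∂μ0) - ∫ x, dg V x ∂μ0 := integral_sub intd2 intd
    rw [h1, s1, s2, dg_half V hV hb hs, integral_const]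
    simp
    ring
  rw [hexp]
  ring

end V

lemma pi_restrict :
    (Measure.pi fun _ : Fin 3 => (volume : Measure ℝ)).restrict (Set.univ.pi fun _ => I01)
      = Measure.pi fun _ : Fin 3 => μ0 := by
  refine (Measure.pi_eq fun s hs => ?_).symm
  rw [Measure.restrict_apply (MeasurableSet.univ_pi fun i => hs i), ← Set.pi_inter_distrib,
    Measure.pi_pi]
  simp [μ0, Measure.restrict_apply (hs _)]

/-- The coordinate equivalence between `Fin 3 → ℝ` and `ℝ × ℝ × ℝ`. -/
noncomputable def eq3 : (Fin 3 → ℝ) ≃ᵐ ℝ × ℝ × ℝ :=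
  (MeasurableEquiv.piFinSuccAbove (fun _ : Fin 3 => ℝ) 0).trans <|
    (MeasurableEquiv.refl ℝ).prodCongr <|
      (MeasurableEquiv.piFinSuccAbove (fun _ : Fin 2 => ℝ) 0).trans <|
        (MeasurableEquiv.refl ℝ).prodCongr (MeasurableEquiv.funUnique (Fin 1) ℝ)

lemma eq3_mp : MeasurePreserving eq3 (Measure.pi fun _ : Fin 3 => μ0)
    (μ0.prod (μ0.prod μ0)) := by
  have h1 := measurePreserving_piFinSuccAbove (fun _ : Fin 3 => μ0) 0
  have h2 := measurePreserving_piFinSuccAbove (fun _ : Fin 2 => μ0) 0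
  have h3 := measurePreserving_funUnique μ0 (Fin 1)
  have hinner : MeasurePreserving
      (⇑((MeasurableEquiv.piFinSuccAbove (fun _ : Fin 2 => ℝ) 0).trans
        ((MeasurableEquiv.refl ℝ).prodCongr (MeasurableEquiv.funUnique (Fin 1) ℝ))))
      (Measure.pi fun _ : Fin 2 => μ0) (μ0.prod μ0) := by
    have hpm : MeasurePreserving
        (Prod.map (id : ℝ → ℝ) (⇑(MeasurableEquiv.funUnique (Fin 1) ℝ)))
        (μ0.prod (Measure.pi fun _ : Fin 1 => μ0)) (μ0.prod μ0) :=
      (MeasurePreserving.id μ0).prod h3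
    exact hpm.comp h2
  have hpm2 : MeasurePreserving
      (Prod.map (id : ℝ → ℝ)
        (⇑((MeasurableEquiv.piFinSuccAbove (fun _ : Fin 2 => ℝ) 0).trans
          ((MeasurableEquiv.refl ℝ).prodCongr (MeasurableEquiv.funUnique (Fin 1) ℝ)))))
      (μ0.prod (Measure.pi fun _ : Fin 2 => μ0)) (μ0.prod (μ0.prod μ0)) :=
    (MeasurePreserving.id μ0).prod hinner
  exact hpm2.comp h1

lemma eq3_apply (q : Fin 3 → ℝ) : eq3 q = (q 0, q 1, q 2) := by
  simp [eq3, MeasurableEquiv.piFinSuccAbove, MeasurableEquiv.prodCongr,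
    MeasurableEquiv.funUnique, MeasurableEquiv.trans, MeasurableEquiv.refl,
    Fin.insertNthEquiv]
  exact ⟨rfl, rfl⟩

lemma pi3_to_prod (g : ℝ × ℝ × ℝ → ℝ) :
    (∫ q, g (q 0, q 1, q 2) ∂(Measure.pi fun _ : Fin 3 => μ0))
      = ∫ p, g p ∂(μ0.prod (μ0.prod μ0)) := by
  rw [← eq3_mp.integral_comp eq3.measurableEmbedding g]
  simp_rw [eq3_apply]

lemma prod_c3 (W : ℝ → ℝ → ℝ) (x : Fin 3 → ℝ)
    [DecidablePred fun p : Fin 3 × Fin 3 => (fun u v : Fin 3 => v = u + 1) p.1 p.2] :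
    (∏ p ∈ Finset.univ.filter
        (fun p : Fin 3 × Fin 3 => (fun u v : Fin 3 => v = u + 1) p.1 p.2),
        W (x p.1) (x p.2))
      = W (x 0) (x 1) * W (x 1) (x 2) * W (x 2) (x 0) := by
  have hfs : (Finset.univ.filter
        (fun p : Fin 3 × Fin 3 => (fun u v : Fin 3 => v = u + 1) p.1 p.2))
      = {((0 : Fin 3), (1 : Fin 3)), (1, 2), (2, 0)} := by
    ext p
    simp only [Finset.mem_filter, Finset.mem_univ, true_and, Finset.mem_insert,
      Finset.mem_singleton]
    constructor
    · intro h; fin_cases p <;> simp_all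
    · intro h; rcases h with h | h | h <;> subst h <;> rfl
  rw [hfs, Finset.prod_insert (by decide), Finset.prod_insert (by decide),
    Finset.prod_singleton]
  ring

lemma stmt11_aux (W : ℝ → ℝ → ℝ) (hW : IsTournamenton W) :
    homDensity (fun u v : Fin 3 => v = u + 1) W ≤ 1 / 8 ∧
      (homDensity (fun u v : Fin 3 => v = u + 1) W = 1 / 8 ↔ IsRegularT W) := by
  classical
  obtain ⟨hWm, hWb⟩ := hW
  set V : ℝ → ℝ → ℝ := fun x y => if x ∈ I01 ∧ y ∈ I01 then W x y else 1 / 2 with hVdef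
  have hI : MeasurableSet I01 := measurableSet_Icc
  have hVm : Measurable (uncurry V) := by
    have hset : MeasurableSet {p : ℝ × ℝ | p.1 ∈ I01 ∧ p.2 ∈ I01} := hI.prod hI
    exact Measurable.ite hset hWm measurable_const
  have hVb : ∀ x y, 0 ≤ V x y ∧ V x y ≤ 1 := by
    intro x y
    by_cases h : x ∈ I01 ∧ y ∈ I01
    · simp only [hVdef, if_pos h]
      exact ⟨(hWb x h.1 y h.2).1, (hWb x h.1 y h.2).2.1⟩
    · simp only [hVdef, if_neg h]; norm_num
  have hVs : ∀ x y, V x y + V y x = 1 := by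
    intro x y
    by_cases h : x ∈ I01 ∧ y ∈ I01
    · have h' : y ∈ I01 ∧ x ∈ I01 := ⟨h.2, h.1⟩
      simp only [hVdef, if_pos h, if_pos h']
      exact (hWb x h.1 y h.2).2.2
    · have h' : ¬(y ∈ I01 ∧ x ∈ I01) := fun hc => h ⟨hc.2, hc.1⟩
      simp only [hVdef, if_neg h, if_neg h']
      norm_num
  -- rewrite the homomorphism density as a triple iterated integral
  have h1 : homDensity (fun u v : Fin 3 => v = u + 1) W
      = ∫ x in Set.univ.pi (fun _ : Fin 3 => I01),
          W (x 0) (x 1) * W (x 1) (x 2) * W (x 2) (x 0) := by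
    unfold homDensity
    refine integral_congr_ae (Filter.Eventually.of_forall fun x => ?_)
    dsimp only
    rw [Finset.filter_congr_decidable]
    exact prod_c3 W x
  have h2 : (∫ x in Set.univ.pi (fun _ : Fin 3 => I01),
          W (x 0) (x 1) * W (x 1) (x 2) * W (x 2) (x 0))
      = ∫ x in Set.univ.pi (fun _ : Fin 3 => I01),
          V (x 0) (x 1) * V (x 1) (x 2) * V (x 2) (x 0) := by
    refine setIntegral_congr_fun (MeasurableSet.univ_pi fun _ => hI) fun x hx => ?_
    have hx0 : x 0 ∈ I01 := hx 0 (Set.mem_univ 0)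
    have hx1 : x 1 ∈ I01 := hx 1 (Set.mem_univ 1)
    have hx2 : x 2 ∈ I01 := hx 2 (Set.mem_univ 2)
    simp only [hVdef, if_pos (And.intro hx0 hx1), if_pos (And.intro hx1 hx2),
      if_pos (And.intro hx2 hx0)]
  have h3 : (∫ x in Set.univ.pi (fun _ : Fin 3 => I01),
          V (x 0) (x 1) * V (x 1) (x 2) * V (x 2) (x 0))
      = ∫ q, V (q 0) (q 1) * V (q 1) (q 2) * V (q 2) (q 0)
          ∂(Measure.pi fun _ : Fin 3 => μ0) := by
    rw [show (volume : Measure (Fin 3 → ℝ)) = Measure.pi fun _ => volume from volume_pi,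
      pi_restrict]
  have h4 : (∫ q, V (q 0) (q 1) * V (q 1) (q 2) * V (q 2) (q 0)
          ∂(Measure.pi fun _ : Fin 3 => μ0))
      = ∫ p : ℝ × ℝ × ℝ, V p.1 p.2.1 * V p.2.1 p.2.2 * V p.2.2 p.1
          ∂(μ0.prod (μ0.prod μ0)) :=
    pi3_to_prod (fun p => V p.1 p.2.1 * V p.2.1 p.2.2 * V p.2.2 p.1)
  have habs : ∀ x y, |V x y| ≤ 1 := fun x y => by
    rw [abs_le]; constructor <;> linarith [(hVb x y).1, (hVb x y).2]
  have m1 : Measurable fun p : ℝ × ℝ × ℝ => p.1 := measurable_fst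
  have m2 : Measurable fun p : ℝ × ℝ × ℝ => p.2.1 := measurable_fst.comp measurable_snd
  have m3 : Measurable fun p : ℝ × ℝ × ℝ => p.2.2 := measurable_snd.comp measurable_snd
  have h5 : (∫ p : ℝ × ℝ × ℝ, V p.1 p.2.1 * V p.2.1 p.2.2 * V p.2.2 p.1
          ∂(μ0.prod (μ0.prod μ0)))
      = ∫ x, ∫ y, ∫ z, V x y * V y z * V z x ∂μ0 ∂μ0 ∂μ0 :=
    tint (fun x y z => V x y * V y z * V z x)
      (((hVm.comp (m1.prodMk m2)).mul (hVm.comp (m2.prodMk m3))).mul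
        (hVm.comp (m3.prodMk m1)))
      (fun x y z => abs3 (habs _ _) (habs _ _) (habs _ _))
  have hmain : homDensity (fun u v : Fin 3 => v = u + 1) W
      = 1 / 8 - 3 / 2 * ∫ x, (dg V x - 1 / 2) ^ 2 ∂μ0 := by
    rw [h1, h2, h3, h4, h5, cyclic_final V hVm hVb hVs]
  set R := ∫ x, (dg V x - 1 / 2) ^ 2 ∂μ0 with hRdef
  have hR0 : 0 ≤ R := integral_nonneg fun x => sq_nonneg _
  have hd := dg_meas V hVm
  have hdb := dg_bd V hVm hVb hVs
  have hintR : Integrable (fun x => (dg V x - 1 / 2) ^ 2) μ0 := by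
    refine integrable_bdd (((hd.sub measurable_const).pow_const 2).aestronglyMeasurable)
      (C := 1) fun x => ?_
    rw [abs_of_nonneg (sq_nonneg _)]
    nlinarith [(hdb x).1, (hdb x).2]
  have hlink : ∀ x ∈ I01, (∫ y in I01, W x y) = dg V x := by
    intro x hx
    have heq : (∫ y in I01, W x y) = ∫ y in I01, V x y :=
      setIntegral_congr_fun hI fun y hy => (if_pos ⟨hx, hy⟩).symm
    rw [heq]
    rfl
  constructor
  · rw [hmain]; linarith
  · rw [hmain]
    have hiff1 : (1 / 8 - 3 / 2 * R = 1 / 8) ↔ R = 0 := by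
      constructor <;> intro h <;> linarith
    rw [hiff1, hRdef, integral_eq_zero_iff_of_nonneg (fun x => sq_nonneg _) hintR]
    unfold IsRegularT
    constructor
    · intro h
      have h'' : ∀ᵐ x : ℝ, x ∈ I01 → (dg V x - 1 / 2) ^ 2 = 0 :=
        (ae_restrict_iff' hI).mp h
      filter_upwards [h''] with x hx hxI
      have hz : (dg V x - 1 / 2) ^ 2 = 0 := hx hxI
      have hd12 : dg V x = 1 / 2 := by
        have := pow_eq_zero_iff (n := 2) (by norm_num) |>.mp hz
        linarith
      rw [hlink x hxI, hd12]
    · intro h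
      have h' : ∀ᵐ x ∂μ0, (∫ y in I01, W x y) = 1 / 2 :=
        (ae_restrict_iff' hI).mpr h
      have hmem : ∀ᵐ x ∂μ0, x ∈ I01 := ae_restrict_mem hI
      filter_upwards [h', hmem] with x hx1 hx2
      have : dg V x = 1 / 2 := by rw [← hlink x hx2]; exact hx1
      simp [this]

end Stmt11Aux
theorem stmt11 (W : ℝ → ℝ → ℝ) (hW : IsTournamenton W) :
    homDensity (fun u v : Fin 3 => v = u + 1) W ≤ 1 / 8 ∧
      (homDensity (fun u v : Fin 3 => v = u + 1) W = 1 / 8 ↔ IsRegularT W) := by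
  exact stmt11_aux W hW

end
end

section
/- Let c be a positive integer and let W be a regular tournamenton. Then t(C[1,1,c], W) = t(B[c], W) / 2. -/
open MeasureTheory

noncomputable section

namespace Hd12

lemma measurableSet_I01 : MeasurableSet I01 := measurableSet_Icc

def muI : Measure ℝ := volume.restrict I01

instance : IsProbabilityMeasure muI := by
  constructor; simp [muI, I01, Real.volume_Icc]

lemma restrict_pi_eq (V : Type) [Fintype V] :
    (volume : Measure (V → ℝ)).restrict (Set.univ.pi fun _ => I01)
      = Measure.pi (fun _ : V => muI) := by
  refine (Measure.pi_eq fun s hs => ?_).symm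
  rw [Measure.restrict_apply (MeasurableSet.univ_pi hs), volume_pi, ← Set.pi_inter_distrib,
    Measure.pi_pi]
  simp_rw [muI, Measure.restrict_apply (hs _)]

lemma integrable_of_bdd {α : Type*} [MeasurableSpace α] {ν : Measure α} [IsFiniteMeasure ν]
    {f : α → ℝ} (hm : Measurable f) (hb : ∀ x, |f x| ≤ 1) : Integrable f ν :=
  ⟨hm.aestronglyMeasurable, HasFiniteIntegral.of_bounded (C := 1) (ae_of_all _ hb)⟩

open Classical in
/-- clamped tournamenton -/
def cl (W : ℝ → ℝ → ℝ) : ℝ → ℝ → ℝ :=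
  fun x y => if x ∈ I01 ∧ y ∈ I01 then W x y else 1/2

open Classical in
lemma cl_meas {W : ℝ → ℝ → ℝ} (hW : Measurable (Function.uncurry W)) :
    Measurable (Function.uncurry (cl W)) := by
  have : Function.uncurry (cl W)
      = fun p : ℝ × ℝ => if p ∈ I01 ×ˢ I01 then Function.uncurry W p else 1/2 := by
    ext p
    by_cases h : p.1 ∈ I01 ∧ p.2 ∈ I01
    · simp [cl, Function.uncurry, Set.mem_prod, h, h.1, h.2]
    · simp only [cl, Function.uncurry, Set.mem_prod, if_neg h]
  rw [this]
  exact Measurable.ite (measurableSet_I01.prod measurableSet_I01) hW measurable_const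

lemma cl_bounds {W : ℝ → ℝ → ℝ} (hW : IsTournamenton W) :
    (∀ x y, 0 ≤ cl W x y ∧ cl W x y ≤ 1) ∧ ∀ x y, cl W x y + cl W y x = 1 := by
  constructor
  · intro x y
    by_cases h : x ∈ I01 ∧ y ∈ I01
    · obtain ⟨h1, h2, -⟩ := hW.2 x h.1 y h.2
      simp [cl, h, h1, h2]
    · simp [cl, h]; norm_num
  · intro x y
    by_cases h1 : x ∈ I01 <;> by_cases h2 : y ∈ I01
    · have := (hW.2 x h1 y h2).2.2
      simpa [cl, h1, h2] using this
    all_goals simp [cl, h1, h2]; try norm_num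

lemma cl_abs_le {W : ℝ → ℝ → ℝ} (hW : IsTournamenton W) (x y : ℝ) : |cl W x y| ≤ 1 := by
  obtain ⟨h1, h2⟩ := (cl_bounds hW).1 x y
  rw [abs_le]; constructor <;> linarith

lemma cl_reg {W : ℝ → ℝ → ℝ} (hreg : IsRegularT W) :
    ∀ᵐ b ∂muI, (∫ t, cl W b t ∂muI) = 1 / 2 := by
  have h0 : ∀ᵐ b : ℝ, b ∈ I01 → (∫ y in I01, W b y) = 1 / 2 := hreg
  have h1 : ∀ᵐ b ∂muI, b ∈ I01 → (∫ y in I01, W b y) = 1 / 2 :=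
    ae_restrict_of_ae h0
  have h2 : ∀ᵐ b ∂muI, b ∈ I01 := ae_restrict_mem measurableSet_I01
  filter_upwards [h1, h2] with b hr hb
  have hcongr : ∫ t, cl W b t ∂muI = ∫ t in I01, W b t := by
    refine setIntegral_congr_fun measurableSet_I01 fun t ht => ?_
    simp [cl, hb, ht]
  rw [hcongr, hr hb]

open scoped Classical

variable {c : ℕ}

def vA : CV 1 1 c := Sum.inl 0
def vB : CV 1 1 c := Sum.inr (Sum.inl 0)
def vM (i : Fin c) : CV 1 1 c := Sum.inr (Sum.inr i)

def SB : Finset (CV 1 1 c × CV 1 1 c) := Finset.univ.image fun i => (vB, vM i)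
def SM : Finset (CV 1 1 c × CV 1 1 c) := Finset.univ.image fun i => (vM i, vA)

lemma filterB_eq :
    (Finset.univ.filter fun p : CV 1 1 c × CV 1 1 c => BEdge c p.1 p.2) = SB ∪ SM := by
  ext ⟨u, v⟩
  rw [Finset.mem_filter_univ]
  simp only [Finset.mem_filter, Finset.mem_univ, true_and, Finset.mem_union, SB, SM,
    Finset.mem_image, Prod.mk.injEq, BEdge]
  rcases u with i | i | i <;> rcases v with j | j | j <;>
    simp [cpart, vA, vB, vM, Fin.fin_one_eq_zero]

lemma filterC_eq :
    (Finset.univ.filter fun p : CV 1 1 c × CV 1 1 c => CEdge 1 1 c p.1 p.2)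
      = insert (vA, vB) (SB ∪ SM) := by
  ext ⟨u, v⟩
  rw [Finset.mem_filter_univ]
  simp only [Finset.mem_filter, Finset.mem_univ, true_and, Finset.mem_insert, Finset.mem_union,
    SB, SM, Finset.mem_image, Prod.mk.injEq, CEdge]
  rcases u with i | i | i <;> rcases v with j | j | j <;>
    simp [cpart, vA, vB, vM, Fin.fin_one_eq_zero]

lemma vAB_not_mem : (vA, vB) ∉ (SB ∪ SM : Finset (CV 1 1 c × CV 1 1 c)) := by
  simp [SB, SM, vA, vB, vM]

lemma SB_disj_SM : Disjoint (SB : Finset (CV 1 1 c × CV 1 1 c)) SM := by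
  rw [Finset.disjoint_left]
  rintro p hu hv
  obtain ⟨i, -, rfl⟩ := Finset.mem_image.1 hu
  obtain ⟨j, -, hj⟩ := Finset.mem_image.1 hv
  simp [vB, vM, Prod.ext_iff] at hj

lemma prodB (W : ℝ → ℝ → ℝ) (x : CV 1 1 c → ℝ) :
    (∏ p ∈ Finset.univ.filter (fun p : CV 1 1 c × CV 1 1 c => BEdge c p.1 p.2),
      W (x p.1) (x p.2))
      = ∏ i : Fin c, (W (x vB) (x (vM i)) * W (x (vM i)) (x vA)) := by
  rw [filterB_eq, Finset.prod_union SB_disj_SM, SB, SM]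
  rw [Finset.prod_image (by intro a _ b _ h; simpa [vB, vM] using h),
    Finset.prod_image (by intro a _ b _ h; simpa [vA, vM] using h), ← Finset.prod_mul_distrib]

lemma prodC (W : ℝ → ℝ → ℝ) (x : CV 1 1 c → ℝ) :
    (∏ p ∈ Finset.univ.filter (fun p : CV 1 1 c × CV 1 1 c => CEdge 1 1 c p.1 p.2),
      W (x p.1) (x p.2))
      = W (x vA) (x vB) * ∏ i : Fin c, (W (x vB) (x (vM i)) * W (x (vM i)) (x vA)) := by
  rw [filterC_eq, Finset.prod_insert vAB_not_mem, ← filterB_eq, prodB]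

lemma pow_int (c : ℕ) (g : ℝ → ℝ) :
    ∫ y : Fin c → ℝ, ∏ i, g (y i) ∂(Measure.pi fun _ => muI) = (∫ t, g t ∂muI) ^ c := by
  have := MeasureTheory.integral_fintype_prod_eq_pow (ι := Fin c) g (μ := muI)
  simpa [Fintype.card_fin] using this

lemma abs_prod_le {ι : Type*} (s : Finset ι) (f : ι → ℝ) (hf : ∀ i, |f i| ≤ 1) :
    |∏ i ∈ s, f i| ≤ 1 := by
  rw [Finset.abs_prod]
  exact Finset.prod_le_one (fun i _ => abs_nonneg _) (fun i _ => hf i)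

lemma abs_mul_prod_le {ι : Type*} (s : Finset ι) (h : ℝ) (f : ι → ℝ) (hh : |h| ≤ 1)
    (hf : ∀ i, |f i| ≤ 1) : |h * ∏ i ∈ s, f i| ≤ 1 := by
  rw [abs_mul]
  exact mul_le_one₀ hh (abs_nonneg _) (abs_prod_le s f hf)

lemma comp_meas {W : ℝ → ℝ → ℝ} (hW : Measurable (Function.uncurry W)) {α : Type*}
    [MeasurableSpace α] {f g : α → ℝ} (hf : Measurable f) (hg : Measurable g) :
    Measurable fun x => W (f x) (g x) := hW.comp (hf.prodMk hg)

variable {W H : ℝ → ℝ → ℝ}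

lemma inner_int (c : ℕ) (hW : Measurable (Function.uncurry W)) (hWb : ∀ x y, |W x y| ≤ 1)
    (hH : Measurable (Function.uncurry H)) (hHb : ∀ x y, |H x y| ≤ 1) (a : ℝ) :
    ∫ z : (Fin 1 ⊕ Fin c) → ℝ,
        H a (z (.inl 0)) * ∏ i : Fin c, (W (z (.inl 0)) (z (.inr i)) * W (z (.inr i)) a)
        ∂(Measure.pi fun _ => muI)
      = ∫ b, H a b * (∫ t, W b t * W t a ∂muI) ^ c ∂muI := by
  have mp := measurePreserving_sumPiEquivProdPi_symm (fun _ : Fin 1 ⊕ Fin c => muI)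
  rw [← mp.integral_comp' (fun z : (Fin 1 ⊕ Fin c) → ℝ =>
    H a (z (.inl 0)) * ∏ i : Fin c, (W (z (.inl 0)) (z (.inr i)) * W (z (.inr i)) a))]
  have hco : ∀ w : ((Fin 1 → ℝ) × (Fin c → ℝ)),
      ((MeasurableEquiv.sumPiEquivProdPi (fun _ : Fin 1 ⊕ Fin c => ℝ)).symm w) (Sum.inl 0)
        = w.1 0 ∧
      ∀ i : Fin c, ((MeasurableEquiv.sumPiEquivProdPi
        (fun _ : Fin 1 ⊕ Fin c => ℝ)).symm w) (Sum.inr i) = w.2 i :=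
    fun w => ⟨rfl, fun i => rfl⟩
  simp only [fun w => (hco w).1, fun w => (hco w).2]
  have hint : Integrable (fun w : ((Fin 1 → ℝ) × (Fin c → ℝ)) =>
      H a (w.1 0) * ∏ i : Fin c, (W (w.1 0) (w.2 i) * W (w.2 i) a))
      ((Measure.pi fun _ : Fin 1 => muI).prod (Measure.pi fun _ : Fin c => muI)) := by
    refine integrable_of_bdd ?_ ?_
    · refine ((comp_meas hH measurable_const
        ((measurable_pi_apply 0).comp measurable_fst)).mul ?_)
      refine Finset.measurable_prod _ fun i _ => ?_
      exact (comp_meas hW ((measurable_pi_apply 0).comp measurable_fst)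
        ((measurable_pi_apply i).comp measurable_snd)).mul
        (comp_meas hW ((measurable_pi_apply i).comp measurable_snd) measurable_const)
    · intro w
      refine abs_mul_prod_le _ _ _ (hHb _ _) fun i => ?_
      rw [abs_mul]
      exact mul_le_one₀ (hWb _ _) (abs_nonneg _) (hWb _ _)
  rw [integral_prod _ hint]
  have hb : ∀ b : ℝ, (∫ y : Fin c → ℝ, H a b * ∏ i : Fin c, (W b (y i) * W (y i) a)
      ∂(Measure.pi fun _ => muI)) = H a b * (∫ t, W b t * W t a ∂muI) ^ c := by
    intro b
    rw [integral_const_mul, pow_int c (fun t => W b t * W t a)]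
  simp_rw [hb]
  exact (measurePreserving_funUnique muI (Fin 1)).integral_comp'
    (fun b => H a b * (∫ t, W b t * W t a ∂muI) ^ c)

lemma phi_meas (hW : Measurable (Function.uncurry W)) :
    Measurable fun p : ℝ × ℝ => ∫ t, W p.2 t * W t p.1 ∂muI := by
  have : StronglyMeasurable fun q : (ℝ × ℝ) × ℝ => W q.1.2 q.2 * W q.2 q.1.1 :=
    ((comp_meas hW (measurable_snd.comp measurable_fst) measurable_snd).mul
      (comp_meas hW measurable_snd (measurable_fst.comp measurable_fst))).stronglyMeasurable
  exact (this.integral_prod_right').measurable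

lemma phi_abs_le (hWb : ∀ x y : ℝ, |W x y| ≤ 1) (p : ℝ × ℝ) :
    |∫ t, W p.2 t * W t p.1 ∂muI| ≤ 1 := by
  have h := norm_integral_le_of_norm_le_const (μ := muI)
    (f := fun t => W p.2 t * W t p.1) (C := 1) (ae_of_all _ fun t => by
      rw [Real.norm_eq_abs, abs_mul]
      exact mul_le_one₀ (hWb _ _) (abs_nonneg _) (hWb _ _))
  simpa [Real.norm_eq_abs] using h

lemma prodInt (c : ℕ) (hW : Measurable (Function.uncurry W)) (hWb : ∀ x y, |W x y| ≤ 1)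
    (hH : Measurable (Function.uncurry H)) (hHb : ∀ x y, |H x y| ≤ 1) :
    Integrable (fun p : ℝ × ℝ => H p.1 p.2 * (∫ t, W p.2 t * W t p.1 ∂muI) ^ c)
      (muI.prod muI) := by
  refine integrable_of_bdd ?_ ?_
  · exact (comp_meas hH measurable_fst measurable_snd).mul ((phi_meas hW).pow_const c)
  · intro p
    rw [abs_mul, abs_pow]
    exact mul_le_one₀ (hHb _ _) (pow_nonneg (abs_nonneg _) c)
      (pow_le_one₀ (abs_nonneg _) (phi_abs_le hWb p))

lemma key_int (c : ℕ) (hW : Measurable (Function.uncurry W)) (hWb : ∀ x y, |W x y| ≤ 1)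
    (hH : Measurable (Function.uncurry H)) (hHb : ∀ x y, |H x y| ≤ 1) :
    ∫ x : (Fin 1 ⊕ (Fin 1 ⊕ Fin c)) → ℝ,
        H (x (.inl 0)) (x (.inr (.inl 0))) *
          ∏ i : Fin c, (W (x (.inr (.inl 0))) (x (.inr (.inr i))) *
            W (x (.inr (.inr i))) (x (.inl 0)))
        ∂(Measure.pi fun _ => muI)
      = ∫ p : ℝ × ℝ, H p.1 p.2 * (∫ t, W p.2 t * W t p.1 ∂muI) ^ c ∂(muI.prod muI) := by
  have mp := measurePreserving_sumPiEquivProdPi_symm (fun _ : Fin 1 ⊕ (Fin 1 ⊕ Fin c) => muI)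
  rw [← mp.integral_comp' (fun x : (Fin 1 ⊕ (Fin 1 ⊕ Fin c)) → ℝ =>
    H (x (.inl 0)) (x (.inr (.inl 0))) *
      ∏ i : Fin c, (W (x (.inr (.inl 0))) (x (.inr (.inr i))) *
        W (x (.inr (.inr i))) (x (.inl 0))))]
  have hco1 : ∀ w : ((Fin 1 → ℝ) × ((Fin 1 ⊕ Fin c) → ℝ)),
      ((MeasurableEquiv.sumPiEquivProdPi (fun _ : Fin 1 ⊕ (Fin 1 ⊕ Fin c) => ℝ)).symm w)
        (Sum.inl 0) = w.1 0 := fun w => rfl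
  have hco2 : ∀ (w : ((Fin 1 → ℝ) × ((Fin 1 ⊕ Fin c) → ℝ))) (s : Fin 1 ⊕ Fin c),
      ((MeasurableEquiv.sumPiEquivProdPi (fun _ : Fin 1 ⊕ (Fin 1 ⊕ Fin c) => ℝ)).symm w)
        (Sum.inr s) = w.2 s := fun w s => rfl
  simp only [hco1, hco2]
  have hint : Integrable (fun w : ((Fin 1 → ℝ) × ((Fin 1 ⊕ Fin c) → ℝ)) =>
      H (w.1 0) (w.2 (.inl 0)) *
        ∏ i : Fin c, (W (w.2 (.inl 0)) (w.2 (.inr i)) * W (w.2 (.inr i)) (w.1 0)))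
      ((Measure.pi fun _ : Fin 1 => muI).prod (Measure.pi fun _ : Fin 1 ⊕ Fin c => muI)) := by
    refine integrable_of_bdd ?_ ?_
    · refine (comp_meas hH ((measurable_pi_apply 0).comp measurable_fst)
        ((measurable_pi_apply (Sum.inl 0)).comp measurable_snd)).mul ?_
      refine Finset.measurable_prod _ fun i _ => ?_
      exact (comp_meas hW ((measurable_pi_apply (Sum.inl 0)).comp measurable_snd)
        ((measurable_pi_apply (Sum.inr i)).comp measurable_snd)).mul
        (comp_meas hW ((measurable_pi_apply (Sum.inr i)).comp measurable_snd)
          ((measurable_pi_apply 0).comp measurable_fst))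
    · intro w
      refine abs_mul_prod_le _ _ _ (hHb _ _) fun i => ?_
      rw [abs_mul]
      exact mul_le_one₀ (hWb _ _) (abs_nonneg _) (hWb _ _)
  rw [integral_prod _ hint]
  have hin : ∀ u : Fin 1 → ℝ,
      (∫ z : (Fin 1 ⊕ Fin c) → ℝ,
        H (u 0) (z (.inl 0)) * ∏ i : Fin c, (W (z (.inl 0)) (z (.inr i)) * W (z (.inr i)) (u 0))
        ∂(Measure.pi fun _ => muI))
      = ∫ b, H (u 0) b * (∫ t, W b t * W t (u 0) ∂muI) ^ c ∂muI :=
    fun u => inner_int c hW hWb hH hHb (u 0)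
  simp_rw [hin]
  exact Eq.trans ((measurePreserving_funUnique muI (Fin 1)).integral_comp'
      (fun a => ∫ b, H a b * (∫ t, W b t * W t a ∂muI) ^ c ∂muI))
    ((integral_prod _ (prodInt c hW hWb hH hHb)).symm)

end Hd12

theorem stmt12 (c : ℕ) (hc : 0 < c) (W : ℝ → ℝ → ℝ)
    (hW : IsTournamenton W) (hreg : IsRegularT W) :
    homDensity (CEdge 1 1 c) W = homDensity (BEdge c) W / 2 := by
  classical
  open Hd12 in
  set W' : ℝ → ℝ → ℝ := Hd12.cl W with hW'def
  have hW'm : Measurable (Function.uncurry W') := Hd12.cl_meas hW.1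
  have hW'b : ∀ x y, |W' x y| ≤ 1 := Hd12.cl_abs_le hW
  have hW'sum : ∀ x y, W' x y + W' y x = 1 := (Hd12.cl_bounds hW).2
  have hreg' : ∀ᵐ b ∂Hd12.muI, (∫ t, W' b t ∂Hd12.muI) = 1 / 2 := Hd12.cl_reg hreg
  have hSmeas : MeasurableSet (Set.univ.pi fun _ : CV 1 1 c => I01) :=
    MeasurableSet.univ_pi fun _ => Hd12.measurableSet_I01
  -- replace W by its clamp inside both homDensities
  have hrepl : ∀ E : CV 1 1 c → CV 1 1 c → Prop,
      homDensity E W = homDensity E W' := by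
    intro E
    refine setIntegral_congr_fun hSmeas fun x hx => ?_
    refine Finset.prod_congr rfl fun p _ => ?_
    have h1 : x p.1 ∈ I01 := hx p.1 (Set.mem_univ _)
    have h2 : x p.2 ∈ I01 := hx p.2 (Set.mem_univ _)
    simp [hW'def, Hd12.cl, h1, h2]
  set π : Measure (ℝ × ℝ) := Hd12.muI.prod Hd12.muI with hπ
  set K : ℝ × ℝ → ℝ := fun p => (∫ t, W' p.2 t * W' t p.1 ∂Hd12.muI) ^ c with hK
  have hone : Measurable (Function.uncurry fun _ _ : ℝ => (1 : ℝ)) := measurable_const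
  have honeb : ∀ x y : ℝ, |(fun _ _ : ℝ => (1 : ℝ)) x y| ≤ 1 := by intro x y; simp
  -- homDensity C = ∫ W' * K over π
  have hC : homDensity (CEdge 1 1 c) W = ∫ p, W' p.1 p.2 * K p ∂π := by
    rw [hrepl]
    show (∫ x in Set.univ.pi fun _ : CV 1 1 c => I01,
        ∏ p ∈ Finset.univ.filter (fun p : CV 1 1 c × CV 1 1 c => CEdge 1 1 c p.1 p.2),
          W' (x p.1) (x p.2)) = _
    rw [Hd12.restrict_pi_eq]
    have := Hd12.key_int (W := W') (H := W') c hW'm hW'b hW'm hW'b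
    refine Eq.trans ?_ this
    refine integral_congr_ae (ae_of_all _ fun x => ?_)
    exact Hd12.prodC W' x
  -- homDensity B = ∫ K over π
  have hB : homDensity (BEdge c) W = ∫ p, K p ∂π := by
    rw [hrepl]
    show (∫ x in Set.univ.pi fun _ : CV 1 1 c => I01,
        ∏ p ∈ Finset.univ.filter (fun p : CV 1 1 c × CV 1 1 c => BEdge c p.1 p.2),
          W' (x p.1) (x p.2)) = _
    rw [Hd12.restrict_pi_eq]
    have := Hd12.key_int (W := W') (H := fun _ _ => (1 : ℝ)) c hW'm hW'b hone honeb
    simp only [one_mul] at this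
    refine Eq.trans ?_ this
    refine integral_congr_ae (ae_of_all _ fun x => ?_)
    exact Hd12.prodB W' x
  -- integrability facts
  have hKm : Measurable K := (Hd12.phi_meas hW'm).pow_const c
  have hKb : ∀ p, |K p| ≤ 1 := fun p => by
    rw [hK, abs_pow]
    exact pow_le_one₀ (abs_nonneg _) (Hd12.phi_abs_le hW'b p)
  have int1 : Integrable (fun p : ℝ × ℝ => W' p.1 p.2 * K p) π :=
    Hd12.prodInt c hW'm hW'b hW'm hW'b
  have int2 : Integrable (fun p : ℝ × ℝ => W' p.2 p.1 * K p) π := by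
    refine Hd12.integrable_of_bdd
      ((Hd12.comp_meas hW'm measurable_snd measurable_fst).mul hKm) fun p => ?_
    rw [abs_mul]
    exact mul_le_one₀ (hW'b _ _) (abs_nonneg _) (hKb p)
  -- K is a.e. symmetric
  have hKsym : ∀ᵐ p ∂π, K (p.2, p.1) = K p := by
    have h1 : ∀ᵐ p : ℝ × ℝ ∂π, (∫ t, W' p.1 t ∂Hd12.muI) = 1 / 2 :=
      (Measure.quasiMeasurePreserving_fst (μ := Hd12.muI) (ν := Hd12.muI)).ae hreg'
    have h2 : ∀ᵐ p : ℝ × ℝ ∂π, (∫ t, W' p.2 t ∂Hd12.muI) = 1 / 2 :=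
      (Measure.quasiMeasurePreserving_snd (μ := Hd12.muI) (ν := Hd12.muI)).ae hreg'
    filter_upwards [h1, h2] with p ha hb
    have m1 : Measurable fun t => W' p.1 t :=
      Hd12.comp_meas hW'm measurable_const measurable_id
    have m2 : Measurable fun t => W' p.2 t :=
      Hd12.comp_meas hW'm measurable_const measurable_id
    have i1 : Integrable (fun t => W' p.1 t) Hd12.muI :=
      Hd12.integrable_of_bdd m1 fun t => hW'b _ _
    have i2 : Integrable (fun t => W' p.2 t) Hd12.muI :=
      Hd12.integrable_of_bdd m2 fun t => hW'b _ _
    have i12 : Integrable (fun t => W' p.1 t * W' p.2 t) Hd12.muI :=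
      Hd12.integrable_of_bdd (m1.mul m2) fun t => by
        rw [abs_mul]; exact mul_le_one₀ (hW'b _ _) (abs_nonneg _) (hW'b _ _)
    have i21 : Integrable (fun t => W' p.2 t * W' p.1 t) Hd12.muI :=
      Hd12.integrable_of_bdd (m2.mul m1) fun t => by
        rw [abs_mul]; exact mul_le_one₀ (hW'b _ _) (abs_nonneg _) (hW'b _ _)
    have key : (∫ t, W' p.1 t * W' t p.2 ∂Hd12.muI)
        = ∫ t, W' p.2 t * W' t p.1 ∂Hd12.muI := by
      have e1 : ∀ t : ℝ, W' p.1 t * W' t p.2 = W' p.1 t - W' p.1 t * W' p.2 t := by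
        intro t
        have h : W' t p.2 = 1 - W' p.2 t := by have := hW'sum t p.2; linarith
        rw [h]; ring
      have e2 : ∀ t : ℝ, W' p.2 t * W' t p.1 = W' p.2 t - W' p.2 t * W' p.1 t := by
        intro t
        have h : W' t p.1 = 1 - W' p.1 t := by have := hW'sum t p.1; linarith
        rw [h]; ring
      simp_rw [e1, e2]
      rw [integral_sub i1 i12, integral_sub i2 i21, ha, hb]
      congr 1
      refine integral_congr_ae (ae_of_all _ fun t => ?_)
      ring
    rw [hK]
    simp only
    rw [key]
  -- swap argument
  have hswap : ∫ p, W' p.2 p.1 * K p ∂π = ∫ p, W' p.1 p.2 * K p ∂π := by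
    have mps : MeasurePreserving (⇑(MeasurableEquiv.prodComm : ℝ × ℝ ≃ᵐ ℝ × ℝ)) π π :=
      Measure.measurePreserving_swap
    have h := mps.integral_comp' (fun p : ℝ × ℝ => W' p.2 p.1 * K p)
    have h' : ∫ p : ℝ × ℝ, W' p.1 p.2 * K (p.2, p.1) ∂π
        = ∫ p, W' p.2 p.1 * K p ∂π := h
    rw [← h']
    refine integral_congr_ae (hKsym.mono fun p hp => ?_)
    show W' p.1 p.2 * K (p.2, p.1) = W' p.1 p.2 * K p
    rw [hp]
  -- sum identity
  have hsum : ∫ p, K p ∂π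
      = (∫ p, W' p.1 p.2 * K p ∂π) + ∫ p, W' p.2 p.1 * K p ∂π := by
    rw [← integral_add int1 int2]
    refine integral_congr_ae (ae_of_all _ fun p => ?_)
    simp only [Pi.add_apply]
    rw [← add_mul, hW'sum, one_mul]
  rw [hC, hB, hsum, hswap]
  ring

end
end

section
/- For every positive integer n, the (2n+1)-vertex carousel tournament contains no subtournament isomorphic to W₄ and no subtournament isomorphic to L₄; indeed, in the carousel tournament the out-neighbors of any vertex induce a transitive tournament and the in-neighbors of any vertex induce a transitive tournament. -/
open MeasureTheory

noncomputable section

def CarouselEdge (n : ℕ) (x y : ZMod (2 * n + 1)) : Prop :=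
  ∃ k : ℕ, 1 ≤ k ∧ k ≤ n ∧ y - x = (k : ZMod (2 * n + 1))

lemma carousel_iff (n : ℕ) (x y : ZMod (2 * n + 1)) :
    CarouselEdge n x y ↔ 1 ≤ (y - x).val ∧ (y - x).val ≤ n := by
  haveI : NeZero (2 * n + 1) := ⟨by omega⟩
  constructor
  · rintro ⟨k, h1, h2, h3⟩
    rw [h3, ZMod.val_cast_of_lt (by omega)]
    exact ⟨h1, h2⟩
  · rintro ⟨h1, h2⟩
    exact ⟨(y - x).val, h1, h2, (ZMod.natCast_zmod_val (y - x)).symm⟩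

lemma carousel_out_lt (n : ℕ) (v x y : ZMod (2 * n + 1))
    (hx : CarouselEdge n v x) (hy : CarouselEdge n v y) :
    CarouselEdge n x y ↔ (x - v).val < (y - v).val := by
  haveI : NeZero (2 * n + 1) := ⟨by omega⟩
  rw [carousel_iff] at hx hy ⊢
  set a := (x - v).val with ha
  set b := (y - v).val with hb
  have hxv : x - v = (a : ZMod (2 * n + 1)) := (ZMod.natCast_zmod_val _).symm
  have hyv : y - v = (b : ZMod (2 * n + 1)) := (ZMod.natCast_zmod_val _).symm
  have hyx : y - x = (y - v) - (x - v) := by ring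
  rcases le_or_gt a b with hab | hab
  · have : y - x = ((b - a : ℕ) : ZMod (2 * n + 1)) := by
      rw [hyx, hxv, hyv, Nat.cast_sub hab]
    rw [this, ZMod.val_cast_of_lt (by omega)]
    omega
  · have : y - x = ((b + (2 * n + 1) - a : ℕ) : ZMod (2 * n + 1)) := by
      rw [hyx, hxv, hyv, Nat.cast_sub (by omega)]
      rw [Nat.cast_add, ZMod.natCast_self]
      ring
    rw [this, ZMod.val_cast_of_lt (by omega)]
    omega

lemma carousel_in_lt (n : ℕ) (v x y : ZMod (2 * n + 1))
    (hx : CarouselEdge n x v) (hy : CarouselEdge n y v) :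
    CarouselEdge n x y ↔ (v - y).val < (v - x).val := by
  haveI : NeZero (2 * n + 1) := ⟨by omega⟩
  rw [carousel_iff] at hx hy ⊢
  set a := (v - x).val with ha
  set b := (v - y).val with hb
  have hxv : v - x = (a : ZMod (2 * n + 1)) := (ZMod.natCast_zmod_val _).symm
  have hyv : v - y = (b : ZMod (2 * n + 1)) := (ZMod.natCast_zmod_val _).symm
  have hyx : y - x = (v - x) - (v - y) := by ring
  rcases le_or_gt b a with hab | hab
  · have : y - x = ((a - b : ℕ) : ZMod (2 * n + 1)) := by
      rw [hyx, hxv, hyv, Nat.cast_sub hab]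
    rw [this, ZMod.val_cast_of_lt (by omega)]
    omega
  · have : y - x = ((a + (2 * n + 1) - b : ℕ) : ZMod (2 * n + 1)) := by
      rw [hyx, hxv, hyv, Nat.cast_sub (by omega)]
      rw [Nat.cast_add, ZMod.natCast_self]
      ring
    rw [this, ZMod.val_cast_of_lt (by omega)]
    omega

theorem stmt14 (n : ℕ) (hn : 0 < n) :
    ¬ ContainsSub (CarouselEdge n) W4Edge ∧
    ¬ ContainsSub (CarouselEdge n) L4Edge ∧
    (∀ v x y z : ZMod (2 * n + 1), CarouselEdge n v x → CarouselEdge n v y →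
      CarouselEdge n v z → CarouselEdge n x y → CarouselEdge n y z →
      CarouselEdge n x z) ∧
    (∀ v x y z : ZMod (2 * n + 1), CarouselEdge n x v → CarouselEdge n y v →
      CarouselEdge n z v → CarouselEdge n x y → CarouselEdge n y z →
      CarouselEdge n x z) := by
  refine ⟨?_, ?_, ?_, ?_⟩
  · rintro ⟨f, hinj, hf⟩
    have e1 : CarouselEdge n (f 0) (f 1) := (hf 0 1).mp (by simp [W4Edge])
    have e2 : CarouselEdge n (f 0) (f 2) := (hf 0 2).mp (by simp [W4Edge])
    have e3 : CarouselEdge n (f 0) (f 3) := (hf 0 3).mp (by simp [W4Edge])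
    have h12 : (f 1 - f 0).val < (f 2 - f 0).val :=
      (carousel_out_lt n (f 0) (f 1) (f 2) e1 e2).mp ((hf 1 2).mp (by simp [W4Edge]))
    have h23 : (f 2 - f 0).val < (f 3 - f 0).val :=
      (carousel_out_lt n (f 0) (f 2) (f 3) e2 e3).mp ((hf 2 3).mp (by simp [W4Edge]))
    have h31 : (f 3 - f 0).val < (f 1 - f 0).val :=
      (carousel_out_lt n (f 0) (f 3) (f 1) e3 e1).mp ((hf 3 1).mp (by simp [W4Edge]))
    omega
  · rintro ⟨f, hinj, hf⟩
    have e1 : CarouselEdge n (f 1) (f 0) := (hf 1 0).mp (by simp [L4Edge])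
    have e2 : CarouselEdge n (f 2) (f 0) := (hf 2 0).mp (by simp [L4Edge])
    have e3 : CarouselEdge n (f 3) (f 0) := (hf 3 0).mp (by simp [L4Edge])
    have h12 : (f 0 - f 2).val < (f 0 - f 1).val :=
      (carousel_in_lt n (f 0) (f 1) (f 2) e1 e2).mp ((hf 1 2).mp (by simp [L4Edge]))
    have h23 : (f 0 - f 3).val < (f 0 - f 2).val :=
      (carousel_in_lt n (f 0) (f 2) (f 3) e2 e3).mp ((hf 2 3).mp (by simp [L4Edge]))
    have h31 : (f 0 - f 1).val < (f 0 - f 3).val :=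
      (carousel_in_lt n (f 0) (f 3) (f 1) e3 e1).mp ((hf 3 1).mp (by simp [L4Edge]))
    omega
  · intro v x y z hx hy hz hxy hyz
    rw [carousel_out_lt n v x y hx hy] at hxy
    rw [carousel_out_lt n v y z hy hz] at hyz
    rw [carousel_out_lt n v x z hx hz]
    omega
  · intro v x y z hx hy hz hxy hyz
    rw [carousel_in_lt n v x y hx hy] at hxy
    rw [carousel_in_lt n v y z hy hz] at hyz
    rw [carousel_in_lt n v x z hx hz]
    omega

end
end

section
/- For every positive integer n, the n-th iterated blow-up of the cyclically oriented triangle contains no subtournament isomorphic to the 5-vertex carousel tournament C₅. -/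
open MeasureTheory

noncomputable section

def BlowupEdge (n : ℕ) (x y : Fin n → ZMod 3) : Prop :=
  ∃ i : Fin n, x i ≠ y i ∧ (∀ j : Fin n, j < i → x j = y j) ∧ y i - x i = 1

lemma key15 (g : ZMod 5 → ZMod 3)
    (h : ∀ u v : ZMod 5, g u ≠ g v → ((v - u = 1 ∨ v - u = 2) ↔ g v - g u = 1)) :
    ∀ u v : ZMod 5, g u = g v := by
  revert h; revert g
  set_option maxRecDepth 100000 in decide

lemma blow_first (n : ℕ) (x y : Fin (n+1) → ZMod 3) (h0 : x 0 ≠ y 0) :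
    BlowupEdge (n+1) x y ↔ y 0 - x 0 = 1 := by
  constructor
  · rintro ⟨i, hne, hlt, hs⟩
    rcases eq_or_ne i 0 with rfl | hi
    · exact hs
    · exact absurd (hlt 0 (Fin.pos_of_ne_zero hi)) h0
  · intro h
    exact ⟨0, h0, fun j hj => absurd hj (by simp), h⟩

lemma blow_tail (n : ℕ) (x y : Fin (n+1) → ZMod 3) (h0 : x 0 = y 0) :
    BlowupEdge (n+1) x y ↔
      BlowupEdge n (fun j => x j.succ) (fun j => y j.succ) := by
  constructor
  · rintro ⟨i, hne, hlt, hs⟩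
    rcases Fin.eq_succ_of_ne_zero (i := i) (fun hi => hne (hi ▸ h0)) with ⟨j, rfl⟩
    refine ⟨j, hne, fun k hk => hlt k.succ ?_, hs⟩
    exact Fin.succ_lt_succ_iff.mpr hk
  · rintro ⟨j, hne, hlt, hs⟩
    refine ⟨j.succ, hne, fun k hk => ?_, hs⟩
    rcases eq_or_ne k 0 with rfl | hk0
    · exact h0
    · rcases Fin.eq_succ_of_ne_zero hk0 with ⟨m, rfl⟩
      exact hlt m (Fin.succ_lt_succ_iff.mp hk)

lemma aux15 : ∀ n : ℕ, ¬ ContainsSub (BlowupEdge n) C5Edge := by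
  intro n
  induction n with
  | zero =>
    rintro ⟨f, hinj, -⟩
    have h01 : f 0 = f 1 := funext fun i => i.elim0
    have := hinj h01
    exact absurd this (by decide)
  | succ n ih =>
    rintro ⟨f, hinj, hedge⟩
    set g : ZMod 5 → ZMod 3 := fun u => f u 0 with hg
    have hconst : ∀ u v : ZMod 5, g u = g v := by
      apply key15
      intro u v huv
      exact (hedge u v).trans (blow_first n (f u) (f v) huv)
    apply ih
    refine ⟨fun u => fun j => f u j.succ, ?_, ?_⟩
    · intro u v huv
      apply hinj
      funext i
      rcases eq_or_ne i 0 with rfl | hi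
      · exact hconst u v
      · rcases Fin.eq_succ_of_ne_zero hi with ⟨m, rfl⟩
        exact congrFun huv m
    · intro u v
      exact (hedge u v).trans (blow_tail n (f u) (f v) (hconst u v))

theorem stmt15 (n : ℕ) (hn : 0 < n) : ¬ ContainsSub (BlowupEdge n) C5Edge :=
  aux15 n

end
end

section
/- Let H be a finite simple digraph containing two vertices u and v that are twins, and let H' be the digraph obtained from H by adding the edge directed from u to v. Then for every tournamenton W it holds that t(H', W) = t(H, W) / 2. -/
open MeasureTheory

noncomputable section

open scoped Classical in
theorem stmt17 {V : Type} [Fintype V] (E : V → V → Prop)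
    (hsimple : ∀ w : V, ¬ E w w) (u v : V) (huv : u ≠ v)
    (hne : ¬ E u v ∧ ¬ E v u)
    (htw : ∀ w : V, (E u w ↔ E v w) ∧ (E w u ↔ E w v))
    (W : ℝ → ℝ → ℝ) (hW : IsTournamenton W) :
    homDensity (fun x y => E x y ∨ (x = u ∧ y = v)) W = homDensity E W / 2 := by
  set s : Equiv.Perm V := Equiv.swap u v with hs
  have sv : s u = v := Equiv.swap_apply_left u v
  have su : s v = u := Equiv.swap_apply_right u v
  have sinv : ∀ a, s (s a) = a := fun a => Equiv.swap_apply_self u v a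
  -- edge relation is swap-invariant
  have hswap : ∀ a b : V, E a b ↔ E (s a) (s b) := by
    intro a b
    rcases eq_or_ne a u with h | hau
    · rcases eq_or_ne b u with h' | hbu
      · rw [h, h', sv]; exact iff_of_false (hsimple u) (hsimple v)
      · rcases eq_or_ne b v with h' | hbv
        · rw [h, h', sv, su]; exact iff_of_false hne.1 hne.2
        · rw [h, sv, Equiv.swap_apply_of_ne_of_ne hbu hbv]; exact (htw b).1
    · rcases eq_or_ne a v with h | hav
      · rcases eq_or_ne b u with h' | hbu
        · rw [h, h', su, sv]; exact iff_of_false hne.2 hne.1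
        · rcases eq_or_ne b v with h' | hbv
          · rw [h, h', su]; exact iff_of_false (hsimple v) (hsimple u)
          · rw [h, su, Equiv.swap_apply_of_ne_of_ne hbu hbv]; exact (htw b).1.symm
      · rw [Equiv.swap_apply_of_ne_of_ne hau hav]
        rcases eq_or_ne b u with h' | hbu
        · rw [h', sv]; exact (htw a).2
        · rcases eq_or_ne b v with h' | hbv
          · rw [h', su]; exact (htw a).2.symm
          · rw [Equiv.swap_apply_of_ne_of_ne hbu hbv]
  set S : Set (V → ℝ) := Set.univ.pi (fun _ : V => I01) with hS
  have hSm : MeasurableSet S := MeasurableSet.univ_pi (fun _ => measurableSet_Icc)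
  have hSvol : volume S = 1 := by rw [hS, volume_pi_pi]; simp [I01]
  set F : (V → ℝ) → ℝ := fun x => ∏ p ∈ Finset.univ.filter (fun p : V × V => E p.1 p.2),
    W (x p.1) (x p.2) with hF
  -- measurability
  have hWm : ∀ a b : V, Measurable (fun x : V → ℝ => W (x a) (x b)) := by
    intro a b
    have h : Measurable fun x : V → ℝ => (x a, x b) :=
      (measurable_pi_apply a).prodMk (measurable_pi_apply b)
    exact hW.1.comp h
  have hFm : Measurable F := Finset.measurable_prod _ (fun p _ => hWm p.1 p.2)
  -- bounds on S
  have hWb : ∀ x ∈ S, ∀ a b : V, 0 ≤ W (x a) (x b) ∧ W (x a) (x b) ≤ 1 := by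
    intro x hx a b
    have ha := hx a trivial
    have hb := hx b trivial
    exact ⟨(hW.2 _ ha _ hb).1, (hW.2 _ ha _ hb).2.1⟩
  have hFb : ∀ x ∈ S, 0 ≤ F x ∧ F x ≤ 1 := by
    intro x hx
    constructor
    · exact Finset.prod_nonneg fun p _ => (hWb x hx p.1 p.2).1
    · exact Finset.prod_le_one (fun p _ => (hWb x hx p.1 p.2).1)
        (fun p _ => (hWb x hx p.1 p.2).2)
  haveI : Fact (volume S < ⊤) := ⟨by rw [hSvol]; exact ENNReal.one_lt_top⟩
  -- integrability helper
  have hint : ∀ g : (V → ℝ) → ℝ, Measurable g → (∀ x ∈ S, |g x| ≤ 1) →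
      IntegrableOn g S := by
    intro g hg hb
    refine Integrable.mono' (integrable_const 1) hg.aestronglyMeasurable ?_
    · filter_upwards [ae_restrict_mem hSm] with x hx
      simpa [Real.norm_eq_abs] using hb x hx
  have hmemS : ∀ x ∈ S, ∀ a : V, x a ∈ I01 := fun x hx a => hx a trivial
  -- the new edge set
  have hfilter : (Finset.univ.filter (fun p : V × V => E p.1 p.2 ∨ (p.1 = u ∧ p.2 = v)))
      = insert (u, v) (Finset.univ.filter (fun p : V × V => E p.1 p.2)) := by
    ext p
    simp only [Finset.mem_filter, Finset.mem_univ, true_and, Finset.mem_insert]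
    constructor
    · rintro (h | ⟨h1, h2⟩)
      · exact Or.inr h
      · exact Or.inl (Prod.ext h1 h2)
    · rintro (rfl | h)
      · exact Or.inr ⟨rfl, rfl⟩
      · exact Or.inl h
  have huvnotin : (u, v) ∉ Finset.univ.filter (fun p : V × V => E p.1 p.2) := by
    simp [hne.1]
  have hprod : ∀ x : V → ℝ,
      (∏ p ∈ Finset.univ.filter (fun p : V × V => E p.1 p.2 ∨ (p.1 = u ∧ p.2 = v)),
        W (x p.1) (x p.2)) = W (x u) (x v) * F x := by
    intro x
    rw [hfilter, Finset.prod_insert huvnotin]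
  -- F is swap-invariant
  have hFswap : ∀ x : V → ℝ, F (fun a => x (s a)) = F x := by
    intro x
    refine Finset.prod_nbij' (fun p => (s p.1, s p.2)) (fun p => (s p.1, s p.2)) ?_ ?_ ?_ ?_ ?_
    · intro p hp
      simp only [Finset.mem_filter, Finset.mem_univ, true_and] at hp ⊢
      exact (hswap p.1 p.2).mp hp
    · intro p hp
      simp only [Finset.mem_filter, Finset.mem_univ, true_and] at hp ⊢
      exact (hswap (s p.1) (s p.2)).mpr (by rwa [sinv, sinv])
    · intro p _; exact Prod.ext (sinv p.1) (sinv p.2)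
    · intro p _; exact Prod.ext (sinv p.1) (sinv p.2)
    · intro p _; rfl
  -- the swap measurable equiv
  set T := MeasurableEquiv.piCongrLeft (fun _ : V => ℝ) s with hT
  have hTapp : ∀ (x : V → ℝ) (a : V), T x a = x (s a) := by
    intro x a
    have := MeasurableEquiv.piCongrLeft_apply_apply s (β := fun _ : V => ℝ) x (s a)
    rw [hT]
    rw [sinv] at this
    exact this
  have hTpre : T ⁻¹' S = S := by
    ext x
    simp only [Set.mem_preimage, hS, Set.mem_pi, Set.mem_univ, forall_true_left]
    constructor
    · intro h a
      have := h (s a)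
      rw [hTapp, sinv] at this
      exact this
    · intro h a
      rw [hTapp]; exact h _
  have hTmp : MeasurePreserving T volume volume :=
    volume_measurePreserving_piCongrLeft (fun _ : V => ℝ) s
  -- key symmetry
  have hkey : ∫ x in S, W (x v) (x u) * F x = ∫ x in S, W (x u) (x v) * F x := by
    have heq := hTmp.setIntegral_preimage_emb T.measurableEmbedding
      (fun x => W (x u) (x v) * F x) S
    rw [hTpre] at heq
    rw [← heq]
    refine setIntegral_congr_fun hSm ?_
    intro x _
    have h1 : T x u = x v := by rw [hTapp, sv]
    have h2 : T x v = x u := by rw [hTapp, su]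
    have h3 : F (T x) = F x := by
      have hfun : T x = fun a => x (s a) := funext (hTapp x)
      rw [hfun, hFswap]
    simp only [h1, h2, h3]
  -- integrabilities
  have habs : ∀ x ∈ S, ∀ a b : V, |W (x a) (x b) * F x| ≤ 1 := by
    intro x hx a b
    rw [abs_mul]
    have h1 : |W (x a) (x b)| ≤ 1 := by
      rw [abs_le]; exact ⟨by linarith [(hWb x hx a b).1], (hWb x hx a b).2⟩
    have h2 : |F x| ≤ 1 := by
      rw [abs_le]; exact ⟨by linarith [(hFb x hx).1], (hFb x hx).2⟩
    calc |W (x a) (x b)| * |F x| ≤ 1 * 1 :=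
          mul_le_mul h1 h2 (abs_nonneg _) (by norm_num)
      _ = 1 := by norm_num
  have hi1 : IntegrableOn (fun x => W (x u) (x v) * F x) S :=
    hint _ ((hWm u v).mul hFm) (fun x hx => habs x hx u v)
  have hi2 : IntegrableOn (fun x => W (x v) (x u) * F x) S :=
    hint _ ((hWm v u).mul hFm) (fun x hx => habs x hx v u)
  -- main computation
  have hE' : homDensity (fun x y => E x y ∨ (x = u ∧ y = v)) W
      = ∫ x in S, W (x u) (x v) * F x := by
    unfold homDensity
    refine setIntegral_congr_fun hSm ?_
    intro x _
    have h := hprod x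
    convert h using 2
    ext p
    simp
  have hsum : ∫ x in S, F x = ∫ x in S, (W (x u) (x v) * F x + W (x v) (x u) * F x) := by
    refine setIntegral_congr_fun hSm ?_
    intro x hx
    have h1 := (hW.2 _ (hmemS x hx u) _ (hmemS x hx v)).2.2
    simp only []
    rw [← add_mul, h1, one_mul]
  have hEeq : homDensity E W = ∫ x in S, F x := rfl
  rw [hE', hEeq, hsum, integral_add hi1 hi2, hkey]
  ring

end
end

section
/- For every finite tournament T with n vertices there exists a regular tournamenton W such that t(T, W) ≥ 2 · (2n)^{-n}. -/
open MeasureTheory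

noncomputable section

def bIdx (N : ℕ) (x : ℝ) : ℕ := min (N - 1) ⌊x * N⌋₊

lemma bIdx_lt {N : ℕ} (hN : 0 < N) (x : ℝ) : bIdx N x < N := by
  unfold bIdx; omega

lemma bIdx_mono (N : ℕ) : Monotone (bIdx N) := by
  intro x y h
  exact min_le_min le_rfl (Nat.floor_le_floor
    (mul_le_mul_of_nonneg_right h (Nat.cast_nonneg N)))

lemma bIdx_measurable (N : ℕ) : Measurable (bIdx N) := (bIdx_mono N).measurable

lemma bIdx_eq {N l : ℕ} (hl : l < N) {x : ℝ} (h1 : (l : ℝ) / N ≤ x)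
    (h2 : x < ((l : ℝ) + 1) / N) : bIdx N x = l := by
  have hNR : (0 : ℝ) < N := by exact_mod_cast (Nat.zero_le l).trans_lt hl
  rw [div_le_iff₀ hNR] at h1
  rw [lt_div_iff₀ hNR] at h2
  have h0 : (0 : ℝ) ≤ x * N := le_trans (by positivity) h1
  have hfl : ⌊x * N⌋₊ = l := by
    rw [Nat.floor_eq_iff h0]
    exact ⟨h1, by linarith⟩
  unfold bIdx; omega

lemma Ico01_eq_biUnion {N : ℕ} (hN : 0 < N) :
    Set.Ico (0 : ℝ) 1 = ⋃ l ∈ Finset.range N, Set.Ico ((l : ℝ) / N) (((l : ℝ) + 1) / N) := by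
  have hNR : (0 : ℝ) < N := by exact_mod_cast hN
  ext x
  simp only [Set.mem_iUnion, Finset.mem_range, Set.mem_Ico, exists_prop]
  constructor
  · rintro ⟨h0, h1⟩
    have hx0 : (0 : ℝ) ≤ x * N := by positivity
    refine ⟨⌊x * N⌋₊, ?_, ?_, ?_⟩
    · exact (Nat.floor_lt hx0).2 (by nlinarith)
    · rw [div_le_iff₀ hNR]; exact Nat.floor_le hx0
    · rw [lt_div_iff₀ hNR]; exact Nat.lt_floor_add_one _
  · rintro ⟨l, hl, h1, h2⟩
    refine ⟨le_trans (by positivity) h1, lt_of_lt_of_le h2 ?_⟩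
    rw [div_le_one hNR]
    have : (l : ℝ) + 1 ≤ N := by exact_mod_cast hl
    linarith

lemma integral_bIdx {N : ℕ} (hN : 0 < N) (g : ℕ → ℝ) :
    (∫ y in Set.Icc (0 : ℝ) 1, g (bIdx N y)) = (∑ l ∈ Finset.range N, g l) / N := by
  have hNR : (0 : ℝ) < N := by exact_mod_cast hN
  have hpm : ∀ l ∈ Finset.range N,
      MeasurableSet (Set.Ico ((l : ℝ) / N) (((l : ℝ) + 1) / N)) :=
    fun l _ => measurableSet_Ico
  have hdisj : Set.Pairwise ((Finset.range N : Finset ℕ) : Set ℕ)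
      (Function.onFun Disjoint fun l => Set.Ico ((l : ℝ) / N) (((l : ℝ) + 1) / N)) := by
    intro a _ b _ hab
    rcases hab.lt_or_gt with h | h
    · apply Set.Ico_disjoint_Ico.2
      have : (a : ℝ) + 1 ≤ b := by exact_mod_cast h
      refine le_trans (min_le_left _ _) (le_trans ?_ (le_max_right _ _))
      gcongr
    · apply Set.Ico_disjoint_Ico.2
      have : (b : ℝ) + 1 ≤ a := by exact_mod_cast h
      refine le_trans (min_le_right _ _) (le_trans ?_ (le_max_left _ _))
      gcongr
  have hvol : ∀ l : ℕ, volume (Set.Ico ((l : ℝ) / N) (((l : ℝ) + 1) / N))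
      = ENNReal.ofReal (1 / N) := by
    intro l
    rw [Real.volume_Ico]
    congr 1
    field_simp
    ring
  have heq : ∀ l ∈ Finset.range N,
      Set.EqOn (fun y => g (bIdx N y)) (fun _ => g l)
        (Set.Ico ((l : ℝ) / N) (((l : ℝ) + 1) / N)) := by
    intro l hl y hy
    simp only [Finset.mem_range] at hl
    simp only
    rw [bIdx_eq hl hy.1 hy.2]
  have hint : ∀ l ∈ Finset.range N,
      IntegrableOn (fun y => g (bIdx N y))
        (Set.Ico ((l : ℝ) / N) (((l : ℝ) + 1) / N)) := by
    intro l hl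
    rw [integrableOn_congr_fun (heq l hl) measurableSet_Ico]
    rw [integrableOn_const_iff]
    right
    rw [hvol l]
    exact ENNReal.ofReal_lt_top
  rw [integral_Icc_eq_integral_Ico, Ico01_eq_biUnion hN,
    integral_biUnion_finset _ hpm hdisj hint]
  rw [Finset.sum_div]
  apply Finset.sum_congr rfl
  intro l hl
  rw [setIntegral_congr_fun measurableSet_Ico (heq l hl), setIntegral_const, measureReal_def,
    hvol l, ENNReal.toReal_ofReal (by positivity), smul_eq_mul]
  field_simp

theorem stmt18 {V : Type} [Fintype V] (E : V → V → Prop) (hT : IsTournament E)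
    (hn : 0 < Fintype.card V) :
    ∃ W : ℝ → ℝ → ℝ, IsTournamenton W ∧ IsRegularT W ∧
      2 * (2 * (Fintype.card V : ℝ)) ^ (-(Fintype.card V : ℤ)) ≤ homDensity E W := by
  classical
  set n := Fintype.card V with hn_def
  set N := 2 * n with hN_def
  have hN : 0 < N := by omega
  have hNR : (0 : ℝ) < N := by exact_mod_cast hN
  obtain ⟨v0⟩ : Nonempty V := Fintype.card_pos_iff.mp hn
  set e : V ≃ Fin n := Fintype.equivFin V with he_def
  -- adjacency-type matrix on Fin n with 1/2 on the diagonal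
  set A : Fin n → Fin n → ℝ :=
    fun i j => if i = j then 1 / 2 else if E (e.symm i) (e.symm j) then 1 else 0 with hA_def
  have hA1 : ∀ i j, A i j + A j i = 1 := by
    intro i j
    by_cases h : i = j
    · subst h; simp [hA_def]; norm_num
    · have hne : e.symm i ≠ e.symm j := fun hh => h (e.symm.injective hh)
      have hiff := hT.2 _ _ hne
      by_cases hE : E (e.symm i) (e.symm j)
      · have hE' : ¬ E (e.symm j) (e.symm i) := hiff.mp hE
        simp [hA_def, h, Ne.symm h, hE, hE']
      · have hE' : E (e.symm j) (e.symm i) := by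
          by_contra hc
          exact hE (hiff.mpr hc)
        simp [hA_def, h, Ne.symm h, hE, hE']
  have hA0 : ∀ i j, 0 ≤ A i j := by
    intro i j; simp only [hA_def]; split_ifs <;> norm_num
  have hA1' : ∀ i j, A i j ≤ 1 := by
    intro i j; simp only [hA_def]; split_ifs <;> norm_num
  have hAE : ∀ u v : V, E u v → A (e u) (e v) = 1 := by
    intro u v huv
    have huvne : u ≠ v := by rintro rfl; exact hT.1 u huv
    have h1 : (e u : Fin n) ≠ e v := fun hh => huvne (e.injective hh)
    simp [hA_def, h1, huv]
  set idxF : ℕ → Fin n := fun k => ⟨k % n, Nat.mod_lt k hn⟩ with hidx_def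
  have hidxF_add : ∀ j : ℕ, idxF (j + n) = idxF j := by
    intro j; apply Fin.ext; simp [hidx_def, Nat.add_mod_right]
  have hidxF_fin : ∀ i : Fin n, idxF (i : ℕ) = i := by
    intro i; apply Fin.ext; simp [hidx_def, Nat.mod_eq_of_lt i.isLt]
  set M : ℕ → ℕ → ℝ := fun k l =>
    if ((k < n) ↔ (l < n)) then A (idxF k) (idxF l) else A (idxF l) (idxF k) with hM_def
  have hM0 : ∀ k l, 0 ≤ M k l := by
    intro k l; simp only [hM_def]; split_ifs <;> [exact hA0 _ _; exact hA0 _ _]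
  have hM1 : ∀ k l, M k l ≤ 1 := by
    intro k l; simp only [hM_def]; split_ifs <;> [exact hA1' _ _; exact hA1' _ _]
  have hMsym : ∀ k l, M k l + M l k = 1 := by
    intro k l
    by_cases h : (k < n) ↔ (l < n)
    · rw [hM_def]; simp only [if_pos h, if_pos h.symm]; exact hA1 _ _
    · have h' : ¬((l < n) ↔ (k < n)) := fun hh => h hh.symm
      rw [hM_def]; simp only [if_neg h, if_neg h']
      exact hA1 _ _
  have hMrow : ∀ k, (∑ l ∈ Finset.range N, M k l) = n := by
    intro k
    have hsplit : (∑ l ∈ Finset.range N, M k l)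
        = (∑ j ∈ Finset.range n, M k j) + ∑ j ∈ Finset.range n, M k (j + n) := by
      rw [hN_def, two_mul]
      rw [Finset.range_eq_Ico, ← Finset.sum_Ico_consecutive _ (Nat.zero_le n) (by omega : n ≤ n + n)]
      congr 1
      · rw [Finset.range_eq_Ico]
      rw [Finset.sum_Ico_eq_sum_range]
      simp [add_comm]
    have hpair : ∀ j ∈ Finset.range n, M k j + M k (j + n) = 1 := by
      intro j hj
      simp only [Finset.mem_range] at hj
      by_cases hk : k < n
      · have h1 : (k < n) ↔ (j < n) := by tauto
        have h2 : ¬((k < n) ↔ (j + n < n)) := by omega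
        rw [hM_def]
        simp only [if_pos h1, if_neg h2, hidxF_add]
        exact hA1 _ _
      · have h1 : ¬((k < n) ↔ (j < n)) := by tauto
        have h2 : (k < n) ↔ (j + n < n) := by omega
        rw [hM_def]
        simp only [if_neg h1, if_pos h2, hidxF_add]
        exact hA1 _ _
    rw [hsplit, ← Finset.sum_add_distrib, Finset.sum_congr rfl hpair]
    simp
  set W : ℝ → ℝ → ℝ := fun x y => M (bIdx N x) (bIdx N y) with hW_def
  have hWm : Measurable (Function.uncurry W) := by
    have h1 : Measurable (fun q : ℕ × ℕ => M q.1 q.2) := measurable_of_countable _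
    exact h1.comp (((bIdx_measurable N).comp measurable_fst).prodMk
      ((bIdx_measurable N).comp measurable_snd))
  have hW0 : ∀ x y, 0 ≤ W x y := fun x y => hM0 _ _
  have hW1 : ∀ x y, W x y ≤ 1 := fun x y => hM1 _ _
  have hWsym : ∀ x y, W x y + W y x = 1 := fun x y => hMsym _ _
  refine ⟨W, ⟨hWm, fun x _ y _ => ⟨hW0 x y, hW1 x y, hWsym x y⟩⟩, ?_, ?_⟩
  · -- regularity
    apply Filter.Eventually.of_forall
    intro x _
    have := integral_bIdx hN (fun l => M (bIdx N x) l)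
    show (∫ y in Set.Icc (0:ℝ) 1, M (bIdx N x) (bIdx N y)) = 1 / 2
    rw [this, hMrow]
    rw [hN_def]
    push_cast
    have hnR : (0:ℝ) < n := by exact_mod_cast hn
    field_simp
  · -- density bound
    set S : Set (V → ℝ) := Set.univ.pi (fun _ : V => I01) with hS_def
    set f : (V → ℝ) → ℝ := fun x =>
      ∏ p ∈ Finset.univ.filter (fun p : V × V => E p.1 p.2), W (x p.1) (x p.2) with hf_def
    have hf0 : ∀ x, 0 ≤ f x := fun x => Finset.prod_nonneg fun p _ => hW0 _ _
    have hf1 : ∀ x, f x ≤ 1 := fun x =>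
      Finset.prod_le_one (fun p _ => hW0 _ _) (fun p _ => hW1 _ _)
    have hfm : Measurable f := by
      apply Finset.measurable_prod
      intro p _
      have hp1 : Measurable (fun x : V → ℝ => (x p.1, x p.2)) :=
        (measurable_pi_apply p.1).prodMk (measurable_pi_apply p.2)
      exact hWm.comp hp1
    have hSm : MeasurableSet S := MeasurableSet.univ_pi fun _ => measurableSet_Icc
    have hSvol : volume S = 1 := by
      rw [hS_def, volume_pi_pi]
      simp [I01, Real.volume_Icc]
    have hint : IntegrableOn f S := by
      apply Measure.integrableOn_of_bounded (M := 1) (by simp [hSvol])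
        hfm.aestronglyMeasurable
      apply Filter.Eventually.of_forall
      intro x
      rw [Real.norm_eq_abs, abs_le]
      exact ⟨by linarith [hf0 x], hf1 x⟩
    -- the two diagonal cells
    set k0 : V → ℕ := fun v => (e v : ℕ) with hk0_def
    set k1 : V → ℕ := fun v => (e v : ℕ) + n with hk1_def
    have hk0lt : ∀ v, k0 v < N := fun v => by
      have := (e v).isLt; simp only [hk0_def]; omega
    have hk1lt : ∀ v, k1 v < N := fun v => by
      have := (e v).isLt; simp only [hk1_def]; omega
    set R : (V → ℕ) → Set (V → ℝ) := fun k =>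
      Set.univ.pi (fun v => Set.Ico ((k v : ℝ) / N) (((k v : ℝ) + 1) / N)) with hR_def
    have hRm : ∀ k, MeasurableSet (R k) := fun k =>
      MeasurableSet.univ_pi fun _ => measurableSet_Ico
    have hRsub : ∀ k : V → ℕ, (∀ v, k v < N) → R k ⊆ S := by
      intro k hk x hx v _
      have hxv := hx v trivial
      simp only [Set.mem_Ico] at hxv
      constructor
      · exact le_trans (by positivity) hxv.1
      · have h2 : ((k v : ℝ) + 1) / N ≤ 1 := by
          rw [div_le_one hNR]
          have : (k v : ℝ) + 1 ≤ N := by exact_mod_cast hk v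
          linarith
        exact le_of_lt (lt_of_lt_of_le hxv.2 h2)
    have hbR : ∀ (k : V → ℕ), (∀ v, k v < N) → ∀ x ∈ R k, ∀ v, bIdx N (x v) = k v := by
      intro k hk x hx v
      have hxv := hx v trivial
      simp only [Set.mem_Ico] at hxv
      exact bIdx_eq (hk v) hxv.1 hxv.2
    have hEne : ∀ u v : V, E u v → u ≠ v := by
      rintro u v huv rfl; exact hT.1 u huv
    -- f equals 1 on R k0 and on R k1
    have hfR0 : ∀ x ∈ R k0, f x = 1 := by
      intro x hx
      apply Finset.prod_eq_one
      intro p hp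
      have hpE : E p.1 p.2 := (Finset.mem_filter.mp hp).2
      rw [hW_def]
      simp only
      rw [hbR k0 hk0lt x hx p.1, hbR k0 hk0lt x hx p.2]
      have h1 : (k0 p.1 < n) ↔ (k0 p.2 < n) := by
        simp only [hk0_def]
        exact ⟨fun _ => (e p.2).isLt, fun _ => (e p.1).isLt⟩
      rw [hM_def]
      simp only [if_pos h1, hk0_def, hidxF_fin]
      rw [if_pos (by simpa [hk0_def] using h1)]
      exact hAE _ _ hpE
    have hfR1 : ∀ x ∈ R k1, f x = 1 := by
      intro x hx
      apply Finset.prod_eq_one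
      intro p hp
      have hpE : E p.1 p.2 := (Finset.mem_filter.mp hp).2
      rw [hW_def]
      simp only
      rw [hbR k1 hk1lt x hx p.1, hbR k1 hk1lt x hx p.2]
      have h1 : (k1 p.1 < n) ↔ (k1 p.2 < n) := by
        simp only [hk1_def]; omega
      rw [hM_def]
      simp only [if_pos h1, hk1_def, hidxF_add, hidxF_fin]
      rw [if_pos (by simpa [hk1_def] using h1)]
      exact hAE _ _ hpE
    have hRvol : ∀ k : V → ℕ, volume (R k) = (ENNReal.ofReal (1 / N)) ^ n := by
      intro k
      rw [hR_def, volume_pi_pi]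
      have : ∀ v : V, volume (Set.Ico ((k v : ℝ) / N) (((k v : ℝ) + 1) / N))
          = ENNReal.ofReal (1 / N) := by
        intro v
        rw [Real.volume_Ico]
        congr 1
        field_simp
        ring
      rw [Finset.prod_congr rfl (fun v _ => this v), Finset.prod_const, Finset.card_univ]
    have hintR : ∀ k : V → ℕ, (∀ v, k v < N) → IntegrableOn f (R k) :=
      fun k hk => hint.mono_set (hRsub k hk)
    have hIR0 : (∫ x in R k0, f x) = (1 / (N:ℝ)) ^ n := by
      rw [setIntegral_congr_fun (hRm k0) hfR0, setIntegral_const, measureReal_def, hRvol k0]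
      rw [ENNReal.toReal_pow, ENNReal.toReal_ofReal (by positivity), smul_eq_mul, mul_one]
    have hIR1 : (∫ x in R k1, f x) = (1 / (N:ℝ)) ^ n := by
      rw [setIntegral_congr_fun (hRm k1) hfR1, setIntegral_const, measureReal_def, hRvol k1]
      rw [ENNReal.toReal_pow, ENNReal.toReal_ofReal (by positivity), smul_eq_mul, mul_one]
    have hdisj : Disjoint (R k0) (R k1) := by
      rw [Set.disjoint_left]
      intro x hx0 hx1
      have h0 := hx0 v0 trivial
      have h1 := hx1 v0 trivial
      simp only [Set.mem_Ico] at h0 h1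
      have hle : ((k0 v0 : ℝ) + 1) / N ≤ (k1 v0 : ℝ) / N := by
        have : (k0 v0 : ℝ) + 1 ≤ k1 v0 := by
          simp only [hk0_def, hk1_def]
          push_cast
          have : (1:ℝ) ≤ n := by exact_mod_cast hn
          linarith
        gcongr
      have := lt_of_lt_of_le h0.2 (le_trans hle h1.1)
      exact absurd this (lt_irrefl _)
    have hunion : (∫ x in R k0 ∪ R k1, f x) = (∫ x in R k0, f x) + ∫ x in R k1, f x :=
      setIntegral_union hdisj (hRm k1) (hintR k0 hk0lt) (hintR k1 hk1lt)
    have hmono : (∫ x in R k0 ∪ R k1, f x) ≤ ∫ x in S, f x := by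
      apply setIntegral_mono_set hint
      · exact Filter.Eventually.of_forall fun x => hf0 x
      · exact Filter.Eventually.of_forall
          (Set.union_subset (hRsub k0 hk0lt) (hRsub k1 hk1lt))
    have hhd : homDensity E W = ∫ x in S, f x := rfl
    rw [hhd]
    have hfinal : 2 * (2 * (n : ℝ)) ^ (-(n : ℤ)) = (1 / (N:ℝ)) ^ n + (1 / (N:ℝ)) ^ n := by
      have hcast : (2 * (n:ℝ)) = (N : ℝ) := by rw [hN_def]; push_cast; ring
      rw [hcast, zpow_neg, zpow_natCast, ← inv_pow, two_mul]
      congr 2 <;> rw [one_div]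
    rw [hfinal]
    calc (1 / (N:ℝ)) ^ n + (1 / (N:ℝ)) ^ n
        = ∫ x in R k0 ∪ R k1, f x := by rw [hunion, hIR0, hIR1]
      _ ≤ ∫ x in S, f x := hmono

end
end
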